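/- arXiv:2510.01759 — 3 statements merged into one kernel-verified Lean document; each statement's English description precedes it below -/
import Mathlib

section
/- Fix μ ∈ Δ(S) and assume: for every family (a_t)_{t∈T} with a_t ∈ A such that there exists ν ∈ Δ(S) with a_t ∈ A*_t(ν) for all t ∈ T, there exists ν̃ ∈ Δ(S) with supp(ν̃) ⊆ supp(μ) and A*_t(ν̃) = {a_t} for all t ∈ T. Then there exists a family (τ^ε)_{ε>0} ⊂ T_μ such that ∫_{Δ(S)} W^ε(ν) dτ^ε(ν) → W̄* = sup_{τ ∈ T_μ} ∫_{Δ(S)} W(ν) dτ(ν) as ε → 0⁺. -/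
open MeasureTheory Finset

noncomputable section

/-- Expected utility `Σ_s u(s,a) ν(s)` of action `a` under belief `ν ∈ Δ(S)`. -/
def expUtil {S α : Type*} [Fintype S] (u : S → α → ℝ) (ν : stdSimplex ℝ S) (a : α) : ℝ :=
  ∑ s, u s a * (ν : S → ℝ) s

/-- Admissible (optimal) actions `A*(ν) = argmax_a Σ_s u(s,a) ν(s)`. -/
def admissible {S α : Type*} [Fintype S] (u : S → α → ℝ) (ν : stdSimplex ℝ S) : Set α :=
  {a | ∀ b, expUtil u ν b ≤ expUtil u ν a}

/-- The sender's gain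
`W(ν) = Σ_t η(t) · max_{a ∈ A*_t(ν)} Σ_s v(s,a) ν(s)` (ties broken in the sender's favor);
the maximum over the (finite nonempty) set of admissible action profiles is expressed as a
supremum. -/
def senderGain {S L : Type*} [Fintype S] [Fintype L] [DecidableEq L]
    {A T : L → Type*} [∀ l, Fintype (A l)] [∀ l, Fintype (T l)]
    (u : ∀ l, T l → S → A l → ℝ) (v : S → (∀ l, A l) → ℝ) (η : ∀ l, T l → ℝ)
    (ν : stdSimplex ℝ S) : ℝ :=
  ∑ t : ∀ l, T l, (∏ l, η l (t l)) *
    sSup {x : ℝ | ∃ a : ∀ l, A l, (∀ l, a l ∈ admissible (u l (t l)) ν) ∧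
      x = ∑ s, v s a * (ν : S → ℝ) s}

/-- `T_μ` : Borel probability measures on `Δ(S)` with barycenter `μ`, with the topology of
weak convergence. -/
def barycentric {S : Type*} [Fintype S] (μ : stdSimplex ℝ S) :
    Set (ProbabilityMeasure (stdSimplex ℝ S)) :=
  {τ | ∀ s : S, (∫ ν, (ν : S → ℝ) s ∂(τ : Measure (stdSimplex ℝ S))) = (μ : S → ℝ) s}

/-- The regularized (Gibbs/softmax) strategy of a receiver with utility `u`, reference
("irrational") strategy `lam` and regularization parameter `ε`, under belief `ν`. -/
def regStrategy {S α : Type*} [Fintype S] [Fintype α] (u : S → α → ℝ) (lam : α → ℝ)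
    (ε : ℝ) (ν : stdSimplex ℝ S) (a : α) : ℝ :=
  lam a * Real.exp (expUtil u ν a / ε) / ∑ b, lam b * Real.exp (expUtil u ν b / ε)

/-- The regularized sender gain
`W^ε(ν) = Σ_t η(t) Σ_s Σ_a v(s,a) ν(s) Π_ℓ θ^ε_{t_ℓ,ν}(a_ℓ)`. -/
def regSenderGain {S L : Type*} [Fintype S] [Fintype L] [DecidableEq L]
    {A T : L → Type*} [∀ l, Fintype (A l)] [∀ l, Fintype (T l)]
    (u : ∀ l, T l → S → A l → ℝ) (v : S → (∀ l, A l) → ℝ) (η : ∀ l, T l → ℝ)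
    (lam : ∀ l, A l → ℝ) (ε : ℝ) (ν : stdSimplex ℝ S) : ℝ :=
  ∑ t : ∀ l, T l, (∏ l, η l (t l)) *
    ∑ s, ∑ a : ∀ l, A l,
      v s a * (ν : S → ℝ) s * ∏ l, regStrategy (u l (t l)) (lam l) ε ν (a l)

/-- **Assumption (reg).** Every action profile family `(a_t)_t` that is admissible under some
prior is the unique admissible profile family under some prior supported inside `supp(μ)`. -/
def regAssumption {S L : Type*} [Fintype S] [Fintype L]
    {A T : L → Type*}
    (u : ∀ l, T l → S → A l → ℝ) (μ : stdSimplex ℝ S) : Prop :=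
  ∀ a : (∀ l, T l) → (∀ l, A l),
    (∃ ν : stdSimplex ℝ S, ∀ t : ∀ l, T l, ∀ l, a t l ∈ admissible (u l (t l)) ν) →
    ∃ ν' : stdSimplex ℝ S, (∀ s, 0 < (ν' : S → ℝ) s → 0 < (μ : S → ℝ) s) ∧
      ∀ t : ∀ l, T l, {b : ∀ l, A l | ∀ l, b l ∈ admissible (u l (t l)) ν'} = {a t}

section Aux
set_option linter.unusedSectionVars false
open Filter Topology Real
open scoped Classical

variable {S : Type*} [Fintype S] [Nonempty S]
  {L : Type*} [Fintype L] [DecidableEq L]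
  {A : L → Type*} [∀ l, Fintype (A l)] [∀ l, Nonempty (A l)]
  {T : L → Type*} [∀ l, Fintype (T l)] [∀ l, Nonempty (T l)]

lemma coord_nonneg (ν : stdSimplex ℝ S) (s : S) : 0 ≤ (ν : S → ℝ) s := ν.2.1 s
lemma coord_sum (ν : stdSimplex ℝ S) : ∑ s, (ν : S → ℝ) s = 1 := ν.2.2
lemma coord_le_one (ν : stdSimplex ℝ S) (s : S) : (ν : S → ℝ) s ≤ 1 := by
  have h : ∑ s, (ν : S → ℝ) s = 1 := ν.2.2
  have := Finset.single_le_sum (f := fun s => (ν : S → ℝ) s) (fun i _ => ν.2.1 i) (mem_univ s)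
  linarith

lemma continuous_coord (s : S) : Continuous fun ν : stdSimplex ℝ S => (ν : S → ℝ) s :=
  (continuous_apply s).comp continuous_subtype_val

lemma continuous_expUtil {α : Type*} (u : S → α → ℝ) (a : α) :
    Continuous fun ν : stdSimplex ℝ S => expUtil u ν a := by
  unfold expUtil
  exact continuous_finset_sum _ fun s _ => (continuous_const.mul (continuous_coord s))

lemma isClosed_admissible {α : Type*} (u : S → α → ℝ) (a : α) :
    IsClosed {ν : stdSimplex ℝ S | a ∈ admissible u ν} := by
  have : {ν : stdSimplex ℝ S | a ∈ admissible u ν} =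
      ⋂ b, {ν | expUtil u ν b ≤ expUtil u ν a} := by
    ext ν; simp [admissible, Set.mem_iInter]
  rw [this]
  exact isClosed_iInter fun b => isClosed_le (continuous_expUtil u b) (continuous_expUtil u a)

lemma exists_admissible {α : Type*} [Fintype α] [Nonempty α] (u : S → α → ℝ)
    (ν : stdSimplex ℝ S) : ∃ a, a ∈ admissible u ν := by
  obtain ⟨a, -, ha⟩ := Finset.exists_max_image univ (fun a => expUtil u ν a) univ_nonempty
  exact ⟨a, fun b => ha b (mem_univ b)⟩

variable (u : ∀ l, T l → S → A l → ℝ) (v : S → (∀ l, A l) → ℝ) (η : ∀ l, T l → ℝ)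
  (lam : ∀ l, A l → ℝ)

/-- Global bound on sender linear values. -/
def rVb : ℝ := ∑ s, ∑ a : ∀ l, A l, |v s a|

/-- Linear sender gain for a fixed profile family. -/
def rPhi (b : (∀ l, T l) → ∀ l, A l) (ν : stdSimplex ℝ S) : ℝ :=
  ∑ t : ∀ l, T l, (∏ l, η l (t l)) * ∑ s, v s (b t) * (ν : S → ℝ) s

/-- Beliefs at which the profile family `b` is admissible. -/
def rSb (b : (∀ l, T l) → ∀ l, A l) : Set (stdSimplex ℝ S) :=
  {ν | ∀ t l, b t l ∈ admissible (u l (t l)) ν}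

lemma rVb_nonneg : 0 ≤ rVb v :=
  Finset.sum_nonneg fun _ _ => Finset.sum_nonneg fun _ _ => abs_nonneg _

lemma val_abs_le (a : ∀ l, A l) (ν : stdSimplex ℝ S) :
    |∑ s, v s a * (ν : S → ℝ) s| ≤ rVb v := by
  calc |∑ s, v s a * (ν : S → ℝ) s| ≤ ∑ s, |v s a * (ν : S → ℝ) s| :=
        Finset.abs_sum_le_sum_abs _ _
    _ ≤ ∑ s, |v s a| := by
        refine Finset.sum_le_sum fun s _ => ?_
        rw [abs_mul, abs_of_nonneg (coord_nonneg ν s)]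
        nlinarith [abs_nonneg (v s a), coord_le_one ν s, coord_nonneg ν s]
    _ ≤ rVb v := by
        refine Finset.sum_le_sum fun s _ => ?_
        exact Finset.single_le_sum (f := fun a' : ∀ l, A l => |v s a'|)
          (fun _ _ => abs_nonneg _) (mem_univ a)

lemma eta_prod_nonneg (hη : ∀ l, η l ∈ stdSimplex ℝ (T l)) (t : ∀ l, T l) :
    0 ≤ ∏ l, η l (t l) :=
  Finset.prod_nonneg fun l _ => (hη l).1 (t l)

lemma eta_sum_one (hη : ∀ l, η l ∈ stdSimplex ℝ (T l)) :
    ∑ t : ∀ l, T l, ∏ l, η l (t l) = 1 := by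
  have h1 : ∑ t : ∀ l, T l, ∏ l, η l (t l) = ∏ l, ∑ x, η l x := by
    rw [Finset.prod_univ_sum, Fintype.piFinset_univ]
  rw [h1]
  simp only [(fun l => (hη l).2 : ∀ l, ∑ x, η l x = 1)]
  exact Finset.prod_const_one

/-- The (finite, nonempty) set of sender values over admissible profiles at `ν`, type `t`. -/
lemma gset_eq_image (t : ∀ l, T l) (ν : stdSimplex ℝ S) :
    {x : ℝ | ∃ a : ∀ l, A l, (∀ l, a l ∈ admissible (u l (t l)) ν) ∧
        x = ∑ s, v s a * (ν : S → ℝ) s} =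
      (fun a : ∀ l, A l => ∑ s, v s a * (ν : S → ℝ) s) ''
        {a | ∀ l, a l ∈ admissible (u l (t l)) ν} := by
  ext x; constructor
  · rintro ⟨a, ha, rfl⟩; exact ⟨a, ha, rfl⟩
  · rintro ⟨a, ha, rfl⟩; exact ⟨a, ha, rfl⟩

lemma gset_nonempty (t : ∀ l, T l) (ν : stdSimplex ℝ S) :
    {x : ℝ | ∃ a : ∀ l, A l, (∀ l, a l ∈ admissible (u l (t l)) ν) ∧
        x = ∑ s, v s a * (ν : S → ℝ) s}.Nonempty := by
  refine ⟨_, ⟨fun l => Classical.choose (exists_admissible (u l (t l)) ν),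
    fun l => Classical.choose_spec (exists_admissible (u l (t l)) ν), rfl⟩⟩

lemma gset_finite (t : ∀ l, T l) (ν : stdSimplex ℝ S) :
    {x : ℝ | ∃ a : ∀ l, A l, (∀ l, a l ∈ admissible (u l (t l)) ν) ∧
        x = ∑ s, v s a * (ν : S → ℝ) s}.Finite := by
  rw [gset_eq_image]
  exact (Set.toFinite _).image _

lemma gsup_mem (t : ∀ l, T l) (ν : stdSimplex ℝ S) :
    sSup {x : ℝ | ∃ a : ∀ l, A l, (∀ l, a l ∈ admissible (u l (t l)) ν) ∧
        x = ∑ s, v s a * (ν : S → ℝ) s} ∈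
      {x : ℝ | ∃ a : ∀ l, A l, (∀ l, a l ∈ admissible (u l (t l)) ν) ∧
        x = ∑ s, v s a * (ν : S → ℝ) s} :=
  (gset_nonempty u v t ν).csSup_mem (gset_finite u v t ν)

lemma gsup_ub (t : ∀ l, T l) (ν : stdSimplex ℝ S) (a : ∀ l, A l)
    (ha : ∀ l, a l ∈ admissible (u l (t l)) ν) :
    ∑ s, v s a * (ν : S → ℝ) s ≤
      sSup {x : ℝ | ∃ a : ∀ l, A l, (∀ l, a l ∈ admissible (u l (t l)) ν) ∧
        x = ∑ s, v s a * (ν : S → ℝ) s} :=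
  le_csSup ((gset_finite u v t ν).bddAbove) ⟨a, ha, rfl⟩

/-- There is a jointly optimal admissible profile family at every belief. -/
lemma exists_opt_profile (ν : stdSimplex ℝ S) :
    ∃ b : (∀ l, T l) → ∀ l, A l, ν ∈ rSb u b ∧
      senderGain u v η ν = rPhi v η b ν ∧
      ∀ t : ∀ l, T l,
        sSup {x : ℝ | ∃ a : ∀ l, A l, (∀ l, a l ∈ admissible (u l (t l)) ν) ∧
          x = ∑ s, v s a * (ν : S → ℝ) s} = ∑ s, v s (b t) * (ν : S → ℝ) s := by
  have h : ∀ t : ∀ l, T l, ∃ a : ∀ l, A l, (∀ l, a l ∈ admissible (u l (t l)) ν) ∧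
      sSup {x : ℝ | ∃ a : ∀ l, A l, (∀ l, a l ∈ admissible (u l (t l)) ν) ∧
        x = ∑ s, v s a * (ν : S → ℝ) s} = ∑ s, v s a * (ν : S → ℝ) s := by
    intro t
    obtain ⟨a, ha, hx⟩ := gsup_mem u v t ν
    exact ⟨a, ha, hx⟩
  choose b hb1 hb2 using h
  refine ⟨b, fun t l => hb1 t l, ?_, hb2⟩
  unfold senderGain rPhi
  exact Finset.sum_congr rfl fun t _ => by rw [hb2 t]

lemma abs_senderGain_le (hη : ∀ l, η l ∈ stdSimplex ℝ (T l)) (ν : stdSimplex ℝ S) :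
    |senderGain u v η ν| ≤ rVb v := by
  unfold senderGain
  calc |∑ t : ∀ l, T l, (∏ l, η l (t l)) * _| ≤
      ∑ t : ∀ l, T l, |(∏ l, η l (t l)) * sSup {x : ℝ | ∃ a : ∀ l, A l,
        (∀ l, a l ∈ admissible (u l (t l)) ν) ∧ x = ∑ s, v s a * (ν : S → ℝ) s}| :=
        Finset.abs_sum_le_sum_abs _ _
    _ ≤ ∑ t : ∀ l, T l, (∏ l, η l (t l)) * rVb v := by
        refine Finset.sum_le_sum fun t _ => ?_
        rw [abs_mul, abs_of_nonneg (eta_prod_nonneg η hη t)]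
        refine mul_le_mul_of_nonneg_left ?_ (eta_prod_nonneg η hη t)
        obtain ⟨a, _, hx⟩ := gsup_mem u v t ν
        rw [hx]; exact val_abs_le v a ν
    _ = rVb v := by rw [← Finset.sum_mul, eta_sum_one η hη, one_mul]

lemma abs_rPhi_le (hη : ∀ l, η l ∈ stdSimplex ℝ (T l)) (b : (∀ l, T l) → ∀ l, A l)
    (ν : stdSimplex ℝ S) : |rPhi v η b ν| ≤ rVb v := by
  unfold rPhi
  calc |∑ t : ∀ l, T l, (∏ l, η l (t l)) * ∑ s, v s (b t) * (ν : S → ℝ) s| ≤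
      ∑ t : ∀ l, T l, |(∏ l, η l (t l)) * ∑ s, v s (b t) * (ν : S → ℝ) s| :=
        Finset.abs_sum_le_sum_abs _ _
    _ ≤ ∑ t : ∀ l, T l, (∏ l, η l (t l)) * rVb v := by
        refine Finset.sum_le_sum fun t _ => ?_
        rw [abs_mul, abs_of_nonneg (eta_prod_nonneg η hη t)]
        exact mul_le_mul_of_nonneg_left (val_abs_le v (b t) ν) (eta_prod_nonneg η hη t)
    _ = rVb v := by rw [← Finset.sum_mul, eta_sum_one η hη, one_mul]

lemma continuous_rPhi (b : (∀ l, T l) → ∀ l, A l) : Continuous (rPhi v η b) := by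
  unfold rPhi
  exact continuous_finset_sum _ fun t _ => continuous_const.mul
    (continuous_finset_sum _ fun s _ => continuous_const.mul (continuous_coord s))

lemma rPhi_eq_comb (b : (∀ l, T l) → ∀ l, A l) (ν : stdSimplex ℝ S) :
    rPhi v η b ν = ∑ s, (∑ t : ∀ l, T l, (∏ l, η l (t l)) * v s (b t)) * (ν : S → ℝ) s := by
  unfold rPhi
  simp_rw [Finset.mul_sum, Finset.sum_mul]
  rw [Finset.sum_comm]
  refine Finset.sum_congr rfl fun s _ => Finset.sum_congr rfl fun t _ => by ring

lemma measurable_senderGain : Measurable (senderGain u v η (S := S) (L := L)) := by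
  have key : ∀ t : ∀ l, T l, Measurable (fun ν : stdSimplex ℝ S =>
      sSup {x : ℝ | ∃ a : ∀ l, A l, (∀ l, a l ∈ admissible (u l (t l)) ν) ∧
        x = ∑ s, v s a * (ν : S → ℝ) s}) := by
    intro t
    have heq : (fun ν : stdSimplex ℝ S =>
        sSup {x : ℝ | ∃ a : ∀ l, A l, (∀ l, a l ∈ admissible (u l (t l)) ν) ∧
          x = ∑ s, v s a * (ν : S → ℝ) s}) =
        fun ν => univ.sup' univ_nonempty (fun a : ∀ l, A l =>
          if (∀ l, a l ∈ admissible (u l (t l)) ν) then ∑ s, v s a * (ν : S → ℝ) s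
          else -(rVb v + 1)) := by
      funext ν
      apply le_antisymm
      · obtain ⟨a, ha, hx⟩ := gsup_mem u v t ν
        rw [hx]
        exact Finset.le_sup'_of_le _ (mem_univ a) (le_of_eq (if_pos ha).symm)
      · rw [Finset.sup'_le_iff]
        intro a _
        by_cases ha : ∀ l, a l ∈ admissible (u l (t l)) ν
        · rw [if_pos ha]; exact gsup_ub u v t ν a ha
        · rw [if_neg ha]
          obtain ⟨a', ha', hx⟩ := gsup_mem u v t ν
          rw [hx]
          have := val_abs_le v a' ν
          have := abs_le.1 this
          linarith
    rw [heq]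
    have : ∀ a : ∀ l, A l, Measurable (fun ν : stdSimplex ℝ S =>
        if (∀ l, a l ∈ admissible (u l (t l)) ν) then ∑ s, v s a * (ν : S → ℝ) s
        else -(rVb v + 1)) := by
      intro a
      refine Measurable.ite ?_ ?_ measurable_const
      · have : {ν : stdSimplex ℝ S | ∀ l, a l ∈ admissible (u l (t l)) ν} =
            ⋂ l, {ν | a l ∈ admissible (u l (t l)) ν} := by
          ext ν; simp [Set.mem_iInter]
        rw [this]
        exact MeasurableSet.iInter fun l => (isClosed_admissible (u l (t l)) (a l)).measurableSet
      · exact (continuous_finset_sum (univ : Finset S) fun s _ =>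
          continuous_const.mul (continuous_coord s)).measurable
    have hm := Finset.measurable_sup' (univ_nonempty (α := ∀ l, A l))
      (fun a _ => this a)
    have hfun : (fun ν : stdSimplex ℝ S => univ.sup' univ_nonempty (fun a : ∀ l, A l =>
        if (∀ l, a l ∈ admissible (u l (t l)) ν) then ∑ s, v s a * (ν : S → ℝ) s
        else -(rVb v + 1))) = univ.sup' univ_nonempty (fun a : ∀ l, A l =>
        fun ν : stdSimplex ℝ S =>
        if (∀ l, a l ∈ admissible (u l (t l)) ν) then ∑ s, v s a * (ν : S → ℝ) s
        else -(rVb v + 1)) := by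
      funext ν; rw [Finset.sup'_apply]
    rw [hfun]
    exact hm
  unfold senderGain
  exact Finset.measurable_sum _ fun t _ => (key t).const_mul _
lemma cont_integrable {f : stdSimplex ℝ S → ℝ} (hf : Continuous f)
    (μ : Measure (stdSimplex ℝ S)) [IsFiniteMeasure μ] : Integrable f μ :=
  hf.integrable_of_hasCompactSupport (HasCompactSupport.of_compactSpace f)

lemma integrable_senderGain (hη : ∀ l, η l ∈ stdSimplex ℝ (T l))
    (τ : Measure (stdSimplex ℝ S)) [IsFiniteMeasure τ] :
    Integrable (senderGain u v η) τ := by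
  refine Integrable.mono' (integrable_const (rVb v))
    (measurable_senderGain u v η).aestronglyMeasurable ?_
  exact Filter.Eventually.of_forall fun ν => by
    rw [Real.norm_eq_abs]; exact abs_senderGain_le u v η hη ν

lemma integral_finsum_dirac {ι : Type*} [Fintype ι] (w : ι → ℝ) (hw : ∀ i, 0 ≤ w i)
    (x : ι → stdSimplex ℝ S) (f : stdSimplex ℝ S → ℝ) (hf : Continuous f) :
    ∫ ν, f ν ∂(∑ i, ENNReal.ofReal (w i) • Measure.dirac (x i)) = ∑ i, w i * f (x i) := by
  rw [integral_finset_sum_measure]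
  · refine Finset.sum_congr rfl fun i _ => ?_
    rw [integral_smul_measure, integral_dirac, ENNReal.toReal_ofReal (hw i), smul_eq_mul]
  · intro i _
    by_cases h : w i = 0
    · simp [h]
    · rw [integrable_smul_measure (by simp [ENNReal.ofReal_eq_zero]; linarith [lt_of_le_of_ne (hw i) (Ne.symm h)]) ENNReal.ofReal_ne_top]
      exact cont_integrable hf _

lemma isProb_finsum_dirac {ι : Type*} [Fintype ι] (w : ι → ℝ) (hw : ∀ i, 0 ≤ w i)
    (hsum : ∑ i, w i = 1) (x : ι → stdSimplex ℝ S) :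
    IsProbabilityMeasure (∑ i, ENNReal.ofReal (w i) • Measure.dirac (x i)) := by
  constructor
  rw [Measure.finset_sum_apply]
  simp only [Measure.smul_apply, measure_univ, smul_eq_mul, mul_one]
  rw [← ENNReal.ofReal_sum_of_nonneg (fun i _ => hw i), hsum, ENNReal.ofReal_one]

/-- linear combinations of coordinates integrate nicely over sets -/
lemma setIntegral_coord_comb (τ : Measure (stdSimplex ℝ S)) [IsFiniteMeasure τ]
    (g : S → ℝ) (R : Set (stdSimplex ℝ S)) :
    ∫ ν in R, (∑ s, g s * (ν : S → ℝ) s) ∂τ = ∑ s, g s * ∫ ν in R, (ν : S → ℝ) s ∂τ := by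
  rw [integral_finset_sum]
  · exact Finset.sum_congr rfl fun s _ => integral_const_mul _ _
  · intro s _
    exact ((cont_integrable (continuous_const.mul (continuous_coord s)) τ)).integrableOn

/-- The decomposition of an arbitrary barycentric measure into a finite barycentric
family of beliefs with admissible profile families achieving the same sender value. -/
lemma decomposition (hη : ∀ l, η l ∈ stdSimplex ℝ (T l))
    (μ : stdSimplex ℝ S) (τ : ProbabilityMeasure (stdSimplex ℝ S))
    (hτ : ∀ s : S, (∫ ν, (ν : S → ℝ) s ∂(τ : Measure (stdSimplex ℝ S))) = (μ : S → ℝ) s) :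
    ∃ (p : ((∀ l, T l) → ∀ l, A l) → ℝ) (m : ((∀ l, T l) → ∀ l, A l) → stdSimplex ℝ S),
      (∀ b, 0 ≤ p b) ∧ (∑ b, p b = 1) ∧
      (∀ s, ∑ b, p b * (m b : S → ℝ) s = (μ : S → ℝ) s) ∧
      (∀ b, p b ≠ 0 → m b ∈ rSb u b) ∧
      (∫ ν, senderGain u v η ν ∂(τ : Measure (stdSimplex ℝ S)))
        = ∑ b, p b * rPhi v η b (m b) := by
  classical
  set B := ((∀ l, T l) → ∀ l, A l) with hB
  letI : LinearOrder B := LinearOrder.lift' (Fintype.equivFin B) (Equiv.injective _)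
  -- the sets E b and the partition R b
  set E : B → Set (stdSimplex ℝ S) :=
    fun b => rSb u b ∩ {ν | senderGain u v η ν = rPhi v η b ν} with hE
  have hEmeas : ∀ b, MeasurableSet (E b) := by
    intro b
    refine MeasurableSet.inter ?_ ?_
    · have : rSb u b = ⋂ (t : ∀ l, T l) (l : L),
          {ν : stdSimplex ℝ S | b t l ∈ admissible (u l (t l)) ν} := by
        ext ν; simp [rSb, Set.mem_iInter]
      rw [this]
      exact MeasurableSet.iInter fun t => MeasurableSet.iInter fun l =>
        (isClosed_admissible (u l (t l)) (b t l)).measurableSet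
    · exact measurableSet_eq_fun (measurable_senderGain u v η)
        (continuous_rPhi v η b).measurable
  have hEcover : ∀ ν, ∃ b, ν ∈ E b := by
    intro ν
    obtain ⟨b, h1, h2, -⟩ := exists_opt_profile u v η ν
    exact ⟨b, h1, h2⟩
  set R : B → Set (stdSimplex ℝ S) :=
    fun b => E b \ ⋃ (b' : B) (_ : b' < b), E b' with hR
  have hRmeas : ∀ b, MeasurableSet (R b) :=
    fun b => (hEmeas b).diff (MeasurableSet.iUnion fun b' =>
      MeasurableSet.iUnion fun _ => hEmeas b')
  have hRsub : ∀ b, R b ⊆ E b := fun b => Set.diff_subset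
  have hRdisj : Set.Pairwise (↑(univ : Finset B)) (Function.onFun Disjoint R) := by
    intro b _ b' _ hne
    rw [Function.onFun, Set.disjoint_left]
    intro ν hb hb'
    rcases lt_or_gt_of_ne hne with h | h
    · exact hb'.2 (Set.mem_biUnion h (hRsub b hb))
    · exact hb.2 (Set.mem_biUnion h (hRsub b' hb'))
  have hRcover : ⋃ b ∈ (univ : Finset B), R b = Set.univ := by
    refine Set.eq_univ_of_forall fun ν => ?_
    have hne : (univ.filter (fun b : B => ν ∈ E b)).Nonempty := by
      obtain ⟨b, hb⟩ := hEcover ν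
      exact ⟨b, by simp [hb]⟩
    set b₀ := (univ.filter (fun b : B => ν ∈ E b)).min' hne with hb₀
    have hmem : ν ∈ E b₀ := by
      have := Finset.min'_mem (univ.filter (fun b : B => ν ∈ E b)) hne
      simpa using this
    refine Set.mem_biUnion (mem_univ b₀) ⟨hmem, ?_⟩
    intro hcon
    obtain ⟨b', hb'⟩ := Set.mem_iUnion.1 hcon
    obtain ⟨hlt, hb'mem⟩ := Set.mem_iUnion.1 hb'
    have : b₀ ≤ b' := Finset.min'_le _ _ (by simp [hb'mem])
    exact absurd hlt (not_lt.2 this)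
  -- weights
  set p : B → ℝ := fun b => ((τ : Measure (stdSimplex ℝ S)) (R b)).toReal with hp
  have hp0 : ∀ b, 0 ≤ p b := fun b => ENNReal.toReal_nonneg
  have hfin : ∀ b, (τ : Measure (stdSimplex ℝ S)) (R b) ≠ ⊤ := fun b => measure_ne_top _ _
  have hsplit : ∀ f : stdSimplex ℝ S → ℝ, Integrable f (τ : Measure (stdSimplex ℝ S)) →
      ∫ ν, f ν ∂(τ : Measure (stdSimplex ℝ S)) =
        ∑ b, ∫ ν in R b, f ν ∂(τ : Measure (stdSimplex ℝ S)) := by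
    intro f hf
    rw [← setIntegral_univ (μ := (τ : Measure (stdSimplex ℝ S))) (f := f), ← hRcover,
      integral_biUnion_finset univ (fun b _ => hRmeas b) hRdisj (fun b _ => hf.integrableOn)]
  have hone : ∑ b, p b = 1 := by
    have h2 := hsplit (fun _ => (1:ℝ)) (integrable_const 1)
    have h3 : ∀ b, ∫ _ in R b, (1:ℝ) ∂(τ : Measure (stdSimplex ℝ S)) = p b := by
      intro b; rw [setIntegral_const, smul_eq_mul, mul_one]; rfl
    rw [Finset.sum_congr rfl (fun b _ => h3 b)] at h2
    simpa using h2.symm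
  set mf : B → S → ℝ := fun b s =>
    if p b = 0 then (μ : S → ℝ) s
    else (∫ ν in R b, (ν : S → ℝ) s ∂(τ : Measure (stdSimplex ℝ S))) / p b with hmf
  have hkey : ∀ b s, p b * mf b s = ∫ ν in R b, (ν : S → ℝ) s ∂(τ : Measure (stdSimplex ℝ S)) := by
    intro b s
    by_cases h : p b = 0
    · have hz : (τ : Measure (stdSimplex ℝ S)) (R b) = 0 := by
        rcases (ENNReal.toReal_eq_zero_iff _).1 h with h' | h'
        · exact h'
        · exact absurd h' (hfin b)
      rw [h, zero_mul, Measure.restrict_eq_zero.2 hz, integral_zero_measure]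
    · rw [hmf]; simp only [if_neg h]; field_simp
  have hint1 : ∀ b, ∫ ν in R b, (∑ s, (ν : S → ℝ) s) ∂(τ : Measure (stdSimplex ℝ S)) = p b := by
    intro b
    have : ∀ ν : stdSimplex ℝ S, (∑ s, (ν : S → ℝ) s) = 1 := coord_sum
    rw [setIntegral_congr_fun (hRmeas b) (fun ν _ => this ν), setIntegral_const,
      smul_eq_mul, mul_one]
    rfl
  have hmf0 : ∀ b s, 0 ≤ mf b s := by
    intro b s
    rw [hmf]
    by_cases h : p b = 0
    · simp only [if_pos h]; exact coord_nonneg μ s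
    · simp only [if_neg h]
      exact div_nonneg (setIntegral_nonneg (hRmeas b) (fun ν _ => coord_nonneg ν s)) (hp0 b)
  have hmf1 : ∀ b, ∑ s, mf b s = 1 := by
    intro b
    by_cases h : p b = 0
    · simp only [hmf, if_pos h]; exact coord_sum μ
    · simp only [hmf, if_neg h]
      rw [← Finset.sum_div]
      have : ∑ s, ∫ ν in R b, (ν : S → ℝ) s ∂(τ : Measure (stdSimplex ℝ S))
          = ∫ ν in R b, (∑ s, (ν : S → ℝ) s) ∂(τ : Measure (stdSimplex ℝ S)) := by
        rw [integral_finset_sum]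
        intro s _
        exact (cont_integrable (continuous_coord s) _).integrableOn
      rw [this, hint1 b, div_self h]
  set m : B → stdSimplex ℝ S := fun b => ⟨mf b, fun s => hmf0 b s, hmf1 b⟩ with hm
  have hcoordm : ∀ b s, (m b : S → ℝ) s = mf b s := fun b s => rfl
  refine ⟨p, m, hp0, hone, ?_, ?_, ?_⟩
  · intro s
    have h1 : ∀ b, p b * (m b : S → ℝ) s
        = ∫ ν in R b, (ν : S → ℝ) s ∂(τ : Measure (stdSimplex ℝ S)) := fun b => hkey b s
    rw [Finset.sum_congr rfl (fun b _ => h1 b),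
      ← hsplit _ (cont_integrable (continuous_coord s) _), hτ s]
  · intro b hb t l c
    have hpc : 0 < p b := lt_of_le_of_ne (hp0 b) (Ne.symm hb)
    have hexp : ∀ a : A l, p b * expUtil (u l (t l)) (m b) a
        = ∫ ν in R b, expUtil (u l (t l)) ν a ∂(τ : Measure (stdSimplex ℝ S)) := by
      intro a
      have h2 : (fun ν : stdSimplex ℝ S => expUtil (u l (t l)) ν a)
          = fun ν : stdSimplex ℝ S => ∑ s, u l (t l) s a * (ν : S → ℝ) s := rfl
      rw [h2, setIntegral_coord_comb]
      have h3 : expUtil (u l (t l)) (m b) a = ∑ s, u l (t l) s a * mf b s := rfl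
      rw [h3, Finset.mul_sum]
      refine Finset.sum_congr rfl fun s _ => ?_
      rw [← hkey b s]; ring
    have hmono : ∫ ν in R b, expUtil (u l (t l)) ν c ∂(τ : Measure (stdSimplex ℝ S))
        ≤ ∫ ν in R b, expUtil (u l (t l)) ν (b t l) ∂(τ : Measure (stdSimplex ℝ S)) := by
      refine setIntegral_mono_on
        ((cont_integrable (continuous_expUtil (u l (t l)) c) _).integrableOn)
        ((cont_integrable (continuous_expUtil (u l (t l)) (b t l)) _).integrableOn)
        (hRmeas b) ?_
      intro ν hν
      exact ((hRsub b hν).1 t l) c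
    have := (hexp c).trans_le (hmono.trans_eq (hexp (b t l)).symm)
    exact le_of_mul_le_mul_left this hpc
  · rw [hsplit _ (integrable_senderGain u v η hη _)]
    refine Finset.sum_congr rfl fun b _ => ?_
    rw [setIntegral_congr_fun (hRmeas b) (fun ν hν => (hRsub b hν).2)]
    have h4 : (fun ν : stdSimplex ℝ S => rPhi v η b ν)
        = fun ν : stdSimplex ℝ S =>
          ∑ s, (∑ t : ∀ l, T l, (∏ l, η l (t l)) * v s (b t)) * (ν : S → ℝ) s := by
      funext ν; exact rPhi_eq_comb v η b ν
    rw [h4, setIntegral_coord_comb, rPhi_eq_comb, Finset.mul_sum]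
    refine Finset.sum_congr rfl fun s _ => ?_
    rw [← hkey b s, hcoordm]; ring

lemma regDenom_pos {α : Type*} [Fintype α] [Nonempty α] (u' : S → α → ℝ) (lm : α → ℝ)
    (hlm : ∀ a, 0 < lm a) (ε : ℝ) (ν : stdSimplex ℝ S) :
    0 < ∑ b, lm b * Real.exp (expUtil u' ν b / ε) :=
  Finset.sum_pos (fun b _ => mul_pos (hlm b) (Real.exp_pos _)) univ_nonempty

lemma regStrategy_nonneg {α : Type*} [Fintype α] [Nonempty α] (u' : S → α → ℝ) (lm : α → ℝ)
    (hlm : ∀ a, 0 < lm a) (ε : ℝ) (ν : stdSimplex ℝ S) (a : α) :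
    0 ≤ regStrategy u' lm ε ν a :=
  div_nonneg (mul_nonneg (hlm a).le (Real.exp_pos _).le) (regDenom_pos u' lm hlm ε ν).le

lemma regStrategy_sum_one {α : Type*} [Fintype α] [Nonempty α] (u' : S → α → ℝ) (lm : α → ℝ)
    (hlm : ∀ a, 0 < lm a) (ε : ℝ) (ν : stdSimplex ℝ S) :
    ∑ a, regStrategy u' lm ε ν a = 1 := by
  unfold regStrategy
  rw [← Finset.sum_div, div_self (ne_of_gt (regDenom_pos u' lm hlm ε ν))]

lemma prodstrat_sum_one (hlampos : ∀ l a, 0 < lam l a) (t : ∀ l, T l) (ε : ℝ)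
    (ν : stdSimplex ℝ S) :
    ∑ a : ∀ l, A l, ∏ l, regStrategy (u l (t l)) (lam l) ε ν (a l) = 1 := by
  rw [← Fintype.piFinset_univ, ← Finset.prod_univ_sum]
  simp only [(fun l => regStrategy_sum_one (u l (t l)) (lam l) (hlampos l) ε ν :
    ∀ l, ∑ a, regStrategy (u l (t l)) (lam l) ε ν a = 1)]
  exact Finset.prod_const_one

lemma prodstrat_nonneg (hlampos : ∀ l a, 0 < lam l a) (t : ∀ l, T l) (ε : ℝ)
    (ν : stdSimplex ℝ S) (a : ∀ l, A l) :
    0 ≤ ∏ l, regStrategy (u l (t l)) (lam l) ε ν (a l) :=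
  Finset.prod_nonneg fun l _ => regStrategy_nonneg (u l (t l)) (lam l) (hlampos l) ε ν (a l)

lemma abs_regSenderGain_le (hη : ∀ l, η l ∈ stdSimplex ℝ (T l))
    (hlampos : ∀ l a, 0 < lam l a) (ε : ℝ) (ν : stdSimplex ℝ S) :
    |regSenderGain u v η lam ε ν| ≤ rVb v := by
  unfold regSenderGain
  have hre : ∀ t : ∀ l, T l,
      ∑ s, ∑ a : ∀ l, A l, v s a * (ν : S → ℝ) s * ∏ l, regStrategy (u l (t l)) (lam l) ε ν (a l)
      = ∑ a : ∀ l, A l, (∑ s, v s a * (ν : S → ℝ) s) *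
          ∏ l, regStrategy (u l (t l)) (lam l) ε ν (a l) := by
    intro t
    rw [Finset.sum_comm]
    exact Finset.sum_congr rfl fun a _ => (Finset.sum_mul _ _ _).symm
  simp_rw [hre]
  calc |∑ t : ∀ l, T l, (∏ l, η l (t l)) * ∑ a : ∀ l, A l, (∑ s, v s a * (ν : S → ℝ) s) *
          ∏ l, regStrategy (u l (t l)) (lam l) ε ν (a l)|
      ≤ ∑ t : ∀ l, T l, |(∏ l, η l (t l)) * ∑ a : ∀ l, A l, (∑ s, v s a * (ν : S → ℝ) s) *
          ∏ l, regStrategy (u l (t l)) (lam l) ε ν (a l)| := Finset.abs_sum_le_sum_abs _ _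
    _ ≤ ∑ t : ∀ l, T l, (∏ l, η l (t l)) * rVb v := by
        refine Finset.sum_le_sum fun t _ => ?_
        rw [abs_mul, abs_of_nonneg (eta_prod_nonneg η hη t)]
        refine mul_le_mul_of_nonneg_left ?_ (eta_prod_nonneg η hη t)
        calc |∑ a : ∀ l, A l, (∑ s, v s a * (ν : S → ℝ) s) *
                ∏ l, regStrategy (u l (t l)) (lam l) ε ν (a l)|
            ≤ ∑ a : ∀ l, A l, |(∑ s, v s a * (ν : S → ℝ) s) *
                ∏ l, regStrategy (u l (t l)) (lam l) ε ν (a l)| := Finset.abs_sum_le_sum_abs _ _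
          _ ≤ ∑ a : ∀ l, A l, rVb v * ∏ l, regStrategy (u l (t l)) (lam l) ε ν (a l) := by
              refine Finset.sum_le_sum fun a _ => ?_
              rw [abs_mul, abs_of_nonneg (prodstrat_nonneg u lam hlampos t ε ν a)]
              exact mul_le_mul_of_nonneg_right (val_abs_le v a ν)
                (prodstrat_nonneg u lam hlampos t ε ν a)
          _ = rVb v := by rw [← Finset.mul_sum, prodstrat_sum_one u lam hlampos t ε ν, mul_one]
    _ = rVb v := by rw [← Finset.sum_mul, eta_sum_one η hη, one_mul]

lemma tendsto_regStrategy {α : Type*} [Fintype α] [Nonempty α] (u' : S → α → ℝ)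
    (lm : α → ℝ) (hlm : ∀ a, 0 < lm a) (ν : stdSimplex ℝ S) (bb : α)
    (hb : ∀ c, c ≠ bb → expUtil u' ν c < expUtil u' ν bb) (c : α) :
    Filter.Tendsto (fun ε => regStrategy u' lm ε ν c) (nhdsWithin 0 (Set.Ioi (0:ℝ)))
      (𝓝 (if c = bb then 1 else 0)) := by
  have hrw : ∀ ε : ℝ, regStrategy u' lm ε ν c =
      (lm c * Real.exp ((expUtil u' ν c - expUtil u' ν bb) / ε)) /
        ∑ a, lm a * Real.exp ((expUtil u' ν a - expUtil u' ν bb) / ε) := by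
    intro ε
    unfold regStrategy
    have h1 : ∀ a : α, lm a * Real.exp (expUtil u' ν a / ε)
        = (lm a * Real.exp ((expUtil u' ν a - expUtil u' ν bb) / ε)) *
            Real.exp (expUtil u' ν bb / ε) := by
      intro a
      rw [mul_assoc, ← Real.exp_add, ← add_div, sub_add_cancel]
    simp_rw [h1]
    rw [← Finset.sum_mul, mul_div_mul_right _ _ (Real.exp_ne_zero _)]
  have hnum : ∀ a : α, Filter.Tendsto
      (fun ε : ℝ => lm a * Real.exp ((expUtil u' ν a - expUtil u' ν bb) / ε))
      (nhdsWithin 0 (Set.Ioi (0:ℝ))) (𝓝 (if a = bb then lm a else 0)) := by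
    intro a
    by_cases h : a = bb
    · subst h
      rw [if_pos rfl]
      have heq : (fun ε : ℝ => lm a * Real.exp ((expUtil u' ν a - expUtil u' ν a) / ε))
          = fun _ => lm a := by
        funext ε; rw [sub_self, zero_div, Real.exp_zero, mul_one]
      rw [heq]; exact tendsto_const_nhds
    · rw [if_neg h]
      have hd : expUtil u' ν a - expUtil u' ν bb < 0 := sub_neg.2 (hb a h)
      have h2 : Filter.Tendsto (fun ε : ℝ => (expUtil u' ν a - expUtil u' ν bb) / ε)
          (nhdsWithin 0 (Set.Ioi (0:ℝ))) Filter.atBot := by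
        simp_rw [div_eq_mul_inv]
        exact Filter.Tendsto.const_mul_atTop_of_neg hd tendsto_inv_nhdsGT_zero
      have h3 := Real.tendsto_exp_atBot.comp h2
      have h4 := h3.const_mul (lm a)
      simpa using h4
  have hden := tendsto_finset_sum (univ : Finset α) (fun a _ => hnum a)
  have hden1 : ∑ a, (if a = bb then lm a else 0) = lm bb := by
    simp [Finset.sum_ite_eq']
  rw [hden1] at hden
  have hdiv := (hnum c).div hden (ne_of_gt (hlm bb))
  have hlimeq : (if c = bb then lm c else 0) / lm bb = (if c = bb then (1:ℝ) else 0) := by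
    by_cases h : c = bb
    · rw [if_pos h, if_pos h, h, div_self (ne_of_gt (hlm bb))]
    · rw [if_neg h, if_neg h, zero_div]
  rw [hlimeq] at hdiv
  have hfun : (fun ε => regStrategy u' lm ε ν c) = fun ε =>
      (lm c * Real.exp ((expUtil u' ν c - expUtil u' ν bb) / ε)) /
        ∑ a, lm a * Real.exp ((expUtil u' ν a - expUtil u' ν bb) / ε) := funext hrw
  rw [hfun]
  exact hdiv

lemma tendsto_regSenderGain (hlampos : ∀ l a, 0 < lam l a) (ν : stdSimplex ℝ S)
    (b : (∀ l, T l) → ∀ l, A l)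
    (hb : ∀ (t : ∀ l, T l) (l : L) (c : A l), c ≠ b t l →
      expUtil (u l (t l)) ν c < expUtil (u l (t l)) ν (b t l)) :
    Filter.Tendsto (fun ε => regSenderGain u v η lam ε ν)
      (nhdsWithin 0 (Set.Ioi (0:ℝ))) (𝓝 (rPhi v η b ν)) := by
  have hterm : ∀ (t : ∀ l, T l) (s : S) (a : ∀ l, A l),
      Filter.Tendsto (fun ε => v s a * (ν : S → ℝ) s *
          ∏ l, regStrategy (u l (t l)) (lam l) ε ν (a l))
        (nhdsWithin 0 (Set.Ioi (0:ℝ)))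
        (𝓝 (v s a * (ν : S → ℝ) s * if a = b t then 1 else 0)) := by
    intro t s a
    have hp := tendsto_finset_prod (univ : Finset L) (fun l _ =>
      tendsto_regStrategy (u l (t l)) (lam l) (hlampos l) ν (b t l)
        (fun c hc => hb t l c hc) (a l))
    have hprod : (∏ l, (if a l = b t l then (1:ℝ) else 0)) = if a = b t then 1 else 0 := by
      by_cases h : a = b t
      · rw [if_pos h]
        refine Finset.prod_eq_one fun l _ => if_pos (congrFun h l)
      · obtain ⟨l, hl⟩ : ∃ l, a l ≠ b t l := by
          by_contra hc; push_neg at hc; exact h (funext hc)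
        rw [if_neg h]
        exact Finset.prod_eq_zero (mem_univ l) (if_neg hl)
      
    rw [hprod] at hp
    exact hp.const_mul _
  have hmain := tendsto_finset_sum (univ : Finset (∀ l, T l)) (fun t _ =>
    (tendsto_finset_sum (univ : Finset S) (fun s _ =>
      tendsto_finset_sum (univ : Finset (∀ l, A l)) (fun a _ => hterm t s a))).const_mul
      (∏ l, η l (t l)))
  have hlim : ∑ t : ∀ l, T l, (∏ l, η l (t l)) * ∑ s, ∑ a : ∀ l, A l,
      (v s a * (ν : S → ℝ) s * if a = b t then (1:ℝ) else 0) = rPhi v η b ν := by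
    unfold rPhi
    refine Finset.sum_congr rfl fun t _ => ?_
    congr 1
    refine Finset.sum_congr rfl fun s _ => ?_
    simp [mul_ite, Finset.sum_ite_eq']
  rw [hlim] at hmain
  unfold regSenderGain
  exact hmain

/-- The optimal sender value over barycentric measures. -/
def rWstar (μ : stdSimplex ℝ S) : ℝ :=
  sSup {x : ℝ | ∃ τ ∈ barycentric μ,
    x = ∫ ν, senderGain u v η ν ∂(τ : Measure (stdSimplex ℝ S))}

lemma abs_integral_senderGain_le (hη : ∀ l, η l ∈ stdSimplex ℝ (T l))
    (τ : ProbabilityMeasure (stdSimplex ℝ S)) :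
    |∫ ν, senderGain u v η ν ∂(τ : Measure (stdSimplex ℝ S))| ≤ rVb v := by
  have h := norm_integral_le_of_norm_le_const (μ := (τ : Measure (stdSimplex ℝ S)))
    (f := senderGain u v η) (C := rVb v)
    (Filter.Eventually.of_forall fun ν => by
      rw [Real.norm_eq_abs]; exact abs_senderGain_le u v η hη ν)
  rw [Real.norm_eq_abs] at h
  simpa using h

lemma wset_nonempty (μ : stdSimplex ℝ S) :
    {x : ℝ | ∃ τ ∈ barycentric μ,
      x = ∫ ν, senderGain u v η ν ∂(τ : Measure (stdSimplex ℝ S))}.Nonempty := by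
  refine ⟨∫ ν, senderGain u v η ν ∂(Measure.dirac μ),
    ⟨⟨Measure.dirac μ, by infer_instance⟩, ?_, rfl⟩⟩
  intro s
  exact integral_dirac _ μ

lemma wset_bddAbove (hη : ∀ l, η l ∈ stdSimplex ℝ (T l)) (μ : stdSimplex ℝ S) :
    BddAbove {x : ℝ | ∃ τ ∈ barycentric μ,
      x = ∫ ν, senderGain u v η ν ∂(τ : Measure (stdSimplex ℝ S))} := by
  refine ⟨rVb v, ?_⟩
  rintro x ⟨τ, -, rfl⟩
  exact (abs_le.1 (abs_integral_senderGain_le u v η hη τ)).2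

lemma continuous_regSenderGain (hlampos : ∀ l a, 0 < lam l a) (ε : ℝ) :
    Continuous (regSenderGain u v η lam ε) := by
  unfold regSenderGain
  refine continuous_finset_sum _ fun t _ => Continuous.mul continuous_const ?_
  refine continuous_finset_sum _ fun s _ => continuous_finset_sum _ fun a _ => ?_
  refine Continuous.mul (Continuous.mul continuous_const (continuous_coord s)) ?_
  refine continuous_finset_prod _ fun l _ => ?_
  unfold regStrategy
  refine Continuous.div ?_ ?_ ?_
  · exact continuous_const.mul ((Real.continuous_exp).comp
      ((continuous_expUtil _ _).div_const ε))
  · exact continuous_finset_sum _ fun c _ => continuous_const.mul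
      ((Real.continuous_exp).comp ((continuous_expUtil _ _).div_const ε))
  · intro ν
    exact ne_of_gt (regDenom_pos (u l (t l)) (lam l) (hlampos l) ε ν)

set_option maxHeartbeats 2000000 in
lemma key_lemma (hη : ∀ l, η l ∈ stdSimplex ℝ (T l))
    (hlampos : ∀ l a, 0 < lam l a)
    (μ : stdSimplex ℝ S) (hasm : regAssumption u μ) (δ : ℝ) (hδ : 0 < δ) :
    ∃ τ' : ProbabilityMeasure (stdSimplex ℝ S), τ' ∈ barycentric μ ∧
      ∀ᶠ ε in nhdsWithin 0 (Set.Ioi (0:ℝ)),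
        |(∫ ν, regSenderGain u v η lam ε ν ∂(τ' : Measure (stdSimplex ℝ S)))
          - rWstar u v η μ| < δ := by
  classical
  set V := rVb v with hVdef
  have hV : 0 ≤ V := rVb_nonneg v
  have hlt : rWstar u v η μ - δ/4 < rWstar u v η μ := by linarith
  obtain ⟨x, hxmem, hxgt⟩ := exists_lt_of_lt_csSup (wset_nonempty u v η μ) hlt
  obtain ⟨τ, hτbar, hxeq⟩ := hxmem
  have hxle : x ≤ rWstar u v η μ :=
    le_csSup (wset_bddAbove u v η hη μ) ⟨τ, hτbar, hxeq⟩
  have hxabs : |x| ≤ V := by rw [hxeq]; exact abs_integral_senderGain_le u v η hη τ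
  obtain ⟨p, m, hp0, hpsum, hbary, hmSb, hWint⟩ := decomposition u v η hη μ τ hτbar
  -- minimum positive coordinate of μ
  have hposex : ∃ s, 0 < (μ : S → ℝ) s := by
    by_contra hcon
    push_neg at hcon
    have hz : ∀ s, (μ : S → ℝ) s = 0 := fun s => le_antisymm (hcon s) (coord_nonneg μ s)
    have h1 := coord_sum μ
    rw [Finset.sum_congr rfl (fun s _ => hz s), Finset.sum_const_zero] at h1
    norm_num at h1
  set Fs := univ.filter (fun s => 0 < (μ : S → ℝ) s) with hFs
  have hFsne : Fs.Nonempty := ⟨hposex.choose, by simp [hFs, hposex.choose_spec]⟩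
  set c := (Fs.image (fun s => (μ : S → ℝ) s)).min' (hFsne.image _) with hcdef
  have hc0 : 0 < c := by
    have hmem := Finset.min'_mem (Fs.image (fun s => (μ : S → ℝ) s)) (hFsne.image _)
    obtain ⟨s, hs, heq⟩ := Finset.mem_image.1 hmem
    exact lt_of_lt_of_eq (Finset.mem_filter.1 hs).2 (heq.trans hcdef.symm)
  have hcle : ∀ s, 0 < (μ : S → ℝ) s → c ≤ (μ : S → ℝ) s := by
    intro s hs
    exact Finset.min'_le _ _ (Finset.mem_image_of_mem _ (by simp [hFs, hs]))
  have hc1 : c ≤ 1 :=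
    le_trans (hcle hposex.choose hposex.choose_spec) (coord_le_one μ _)
  -- parameters
  set β := min (δ/(16*(V+1))) (1/2) with hβdef
  have hβ0 : 0 < β := lt_min (by positivity) one_half_pos
  have hβδ : β ≤ δ/(16*(V+1)) := min_le_left _ _
  have hβh : β ≤ 1/2 := min_le_right _ _
  set r := c * β with hrdef
  have hr0 : 0 < r := mul_pos hc0 hβ0
  have hrβ : r ≤ β := by nlinarith
  have hr1 : r ≤ 1/2 := hrβ.trans hβh
  -- perturbation points from the assumption
  have hch : ∀ b : (∀ l, T l) → ∀ l, A l, ∃ ν'' : stdSimplex ℝ S,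
      p b ≠ 0 → ((∀ s, 0 < (ν'' : S → ℝ) s → 0 < (μ : S → ℝ) s) ∧
        ∀ t : ∀ l, T l,
          {a : ∀ l, A l | ∀ l, a l ∈ admissible (u l (t l)) ν''} = {b t}) := by
    intro b
    by_cases h : p b = 0
    · exact ⟨μ, fun h' => absurd h h'⟩
    · obtain ⟨ν'', h1, h2⟩ := hasm b ⟨m b, fun t l => hmSb b h t l⟩
      exact ⟨ν'', fun _ => ⟨h1, h2⟩⟩
  choose nu' hnu' using hch
  -- the perturbed points
  have hmemΩ : ∀ b, (fun s => (1-r) * (m b : S → ℝ) s + r * (nu' b : S → ℝ) s)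
      ∈ stdSimplex ℝ S := by
    intro b
    constructor
    · intro s
      have h1 := coord_nonneg (m b) s
      have h2 := coord_nonneg (nu' b) s
      dsimp only
      nlinarith [hr0.le, hr1]
    · rw [Finset.sum_add_distrib, ← Finset.mul_sum, ← Finset.mul_sum,
        coord_sum, coord_sum]
      ring
  set nhat : ((∀ l, T l) → ∀ l, A l) → stdSimplex ℝ S := fun b => ⟨_, hmemΩ b⟩ with hnhat
  set mm : S → ℝ := fun s => ∑ b, p b * (nu' b : S → ℝ) s with hmm
  have hmm0 : ∀ s, 0 ≤ mm s :=
    fun s => Finset.sum_nonneg fun b _ => mul_nonneg (hp0 b) (coord_nonneg _ s)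
  have hmm1 : ∀ s, mm s ≤ 1 := by
    intro s
    calc ∑ b, p b * (nu' b : S → ℝ) s ≤ ∑ b, p b := by
          refine Finset.sum_le_sum fun b _ => ?_
          nlinarith [coord_le_one (nu' b) s, coord_nonneg (nu' b) s, hp0 b]
      _ = 1 := hpsum
  have hmmsum : ∑ s, mm s = 1 := by
    rw [hmm]
    rw [Finset.sum_comm]
    have : ∀ b, ∑ s, p b * (nu' b : S → ℝ) s = p b := by
      intro b; rw [← Finset.mul_sum, coord_sum, mul_one]
    rw [Finset.sum_congr rfl fun b _ => this b, hpsum]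
  have hmm_zero : ∀ s, ¬ (0 < (μ : S → ℝ) s) → mm s = 0 := by
    intro s hs
    rw [hmm]
    refine Finset.sum_eq_zero fun b _ => ?_
    by_cases hb : p b = 0
    · rw [hb, zero_mul]
    · have hsupp := (hnu' b hb).1 s
      have : (nu' b : S → ℝ) s = 0 := by
        by_contra hnz
        exact hs (hsupp (lt_of_le_of_ne (coord_nonneg _ s) (Ne.symm hnz)))
      rw [this, mul_zero]
  have hρmem : (fun s => ((μ : S → ℝ) s - (1-β)*((1-r)*(μ : S → ℝ) s + r * mm s))/β)
      ∈ stdSimplex ℝ S := by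
    constructor
    · intro s
      apply div_nonneg _ hβ0.le
      by_cases hs : 0 < (μ : S → ℝ) s
      · have h1 := hcle s hs
        have h2 := hmm1 s
        have h3 := hmm0 s
        have h4 := coord_le_one μ s
        have key : (μ : S → ℝ) s - (1-β)*((1-r)*(μ : S → ℝ) s + r * mm s)
            = (μ : S → ℝ) s * (β + r - β*r) - (1-β)*r*(mm s) := by ring
        rw [key]
        have e1 : (1-β)*r*(mm s) ≤ r := by
          have e1a : (1-β) * mm s ≤ 1 := by
            nlinarith [mul_nonneg (by linarith [hβh] : (0:ℝ) ≤ 1-β)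
              (by linarith : (0:ℝ) ≤ 1 - mm s)]
          have e1b := mul_le_mul_of_nonneg_left e1a hr0.le
          nlinarith [e1b]
        have e0 : (0:ℝ) ≤ β + r - β*r := by nlinarith [hr0.le, hβ0.le, hr1, hβh]
        have e2 : c * (β + r - β*r) ≤ (μ : S → ℝ) s * (β + r - β*r) :=
          mul_le_mul_of_nonneg_right h1 e0
        have e3 : r ≤ c * (β + r - β*r) := by
          have e4 : c * (β + r - β*r) - r = c*r*(1-β) := by rw [hrdef]; ring
          nlinarith [mul_nonneg (mul_nonneg hc0.le hr0.le) (by linarith [hβh] : (0:ℝ) ≤ 1-β)]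
        linarith
      · have h0 : (μ : S → ℝ) s = 0 := le_antisymm (not_lt.1 hs) (coord_nonneg μ s)
        rw [h0, hmm_zero s hs]
        norm_num
    · rw [← Finset.sum_div]
      have e1 : ∑ s, ((μ : S → ℝ) s - (1-β)*((1-r)*(μ : S → ℝ) s + r * mm s))
          = (∑ s, (μ : S → ℝ) s)
            - (1-β)*((1-r)*(∑ s, (μ : S → ℝ) s) + r * ∑ s, mm s) := by
        rw [Finset.sum_sub_distrib, ← Finset.mul_sum]
        congr 1
        rw [Finset.sum_add_distrib, ← Finset.mul_sum, ← Finset.mul_sum]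
      rw [e1, coord_sum, hmmsum]
      field_simp
      ring
  set ρ : stdSimplex ℝ S := ⟨_, hρmem⟩ with hρ
  -- the measure
  set w : Option ((∀ l, T l) → ∀ l, A l) → ℝ :=
    fun o => Option.elim o β (fun b => (1-β) * p b) with hw
  set pt : Option ((∀ l, T l) → ∀ l, A l) → stdSimplex ℝ S :=
    fun o => Option.elim o ρ nhat with hpt
  have hw0 : ∀ o, 0 ≤ w o := by
    rintro (_ | b)
    · exact hβ0.le
    · exact mul_nonneg (by linarith) (hp0 b)
  have hwsum : ∑ o, w o = 1 := by
    rw [Fintype.sum_option]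
    simp only [hw, Option.elim]
    rw [← Finset.mul_sum, hpsum]
    ring
  have hprob : IsProbabilityMeasure
      (∑ o, ENNReal.ofReal (w o) • Measure.dirac (pt o)) :=
    isProb_finsum_dirac w hw0 hwsum pt
  set τ' : ProbabilityMeasure (stdSimplex ℝ S) :=
    ⟨∑ o, ENNReal.ofReal (w o) • Measure.dirac (pt o), hprob⟩ with hτ'
  have hint : ∀ f : stdSimplex ℝ S → ℝ, Continuous f →
      ∫ ν, f ν ∂(τ' : Measure (stdSimplex ℝ S))
        = β * f ρ + (1-β) * ∑ b, p b * f (nhat b) := by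
    intro f hf
    have : (τ' : Measure (stdSimplex ℝ S))
        = ∑ o, ENNReal.ofReal (w o) • Measure.dirac (pt o) := rfl
    rw [this, integral_finsum_dirac w hw0 pt f hf, Fintype.sum_option]
    simp only [hw, hpt, Option.elim]
    rw [Finset.mul_sum]
    congr 1
    exact Finset.sum_congr rfl fun b _ => by ring
  have hbar' : τ' ∈ barycentric μ := by
    intro s
    rw [hint _ (continuous_coord s)]
    have h5 : ∀ b, (nhat b : S → ℝ) s
        = (1-r) * (m b : S → ℝ) s + r * (nu' b : S → ℝ) s := fun b => rfl
    have h6 : (ρ : S → ℝ) s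
        = ((μ : S → ℝ) s - (1-β)*((1-r)*(μ : S → ℝ) s + r * mm s))/β := rfl
    have h7 : ∑ b, p b * (nhat b : S → ℝ) s
        = (1-r) * (μ : S → ℝ) s + r * mm s := by
      have e2 : ∀ b, p b * (nhat b : S → ℝ) s
          = (1-r) * (p b * (m b : S → ℝ) s) + r * (p b * (nu' b : S → ℝ) s) := by
        intro b; rw [h5 b]; ring
      calc ∑ b, p b * (nhat b : S → ℝ) s
          = (1-r) * (∑ b, p b * (m b : S → ℝ) s)
              + r * (∑ b, p b * (nu' b : S → ℝ) s) := by
            rw [Finset.sum_congr rfl fun b _ => e2 b, Finset.sum_add_distrib,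
              ← Finset.mul_sum, ← Finset.mul_sum]
        _ = (1-r) * (μ : S → ℝ) s + r * mm s := by rw [hbary s]
    rw [h7, h6]
    have hβne : β ≠ 0 := ne_of_gt hβ0
    field_simp
    ring
  -- strict admissibility at the perturbed points
  have hstrict : ∀ b, p b ≠ 0 → ∀ (t : ∀ l, T l) (l : L) (cA : A l), cA ≠ b t l →
      expUtil (u l (t l)) (nhat b) cA < expUtil (u l (t l)) (nhat b) (b t l) := by
    intro b hb t l cA hne
    obtain ⟨hsupp, huniq⟩ := hnu' b hb
    have hbadm : ∀ l', b t l' ∈ admissible (u l' (t l')) (nu' b) := by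
      have hmem : b t ∈ ({b t} : Set (∀ l, A l)) := Set.mem_singleton _
      rw [← huniq t] at hmem
      exact hmem
    have hcnot : cA ∉ admissible (u l (t l)) (nu' b) := by
      intro hc
      have hupd : Function.update (b t) l cA ∈
          {a : ∀ l, A l | ∀ l', a l' ∈ admissible (u l' (t l')) (nu' b)} := by
        intro l'
        by_cases h : l' = l
        · subst h; rw [Function.update_self]; exact hc
        · rw [Function.update_of_ne h]; exact hbadm l'
      rw [huniq t] at hupd
      have heq := congrFun hupd l
      rw [Function.update_self] at heq
      exact hne heq
    have hstrict' : expUtil (u l (t l)) (nu' b) cA < expUtil (u l (t l)) (nu' b) (b t l) := by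
      have hcnot' : ¬ ∀ a', expUtil (u l (t l)) (nu' b) a' ≤ expUtil (u l (t l)) (nu' b) cA :=
        hcnot
      push_neg at hcnot'
      obtain ⟨a', ha'⟩ := hcnot'
      exact lt_of_lt_of_le ha' (hbadm l a')
    have hweak : expUtil (u l (t l)) (m b) cA ≤ expUtil (u l (t l)) (m b) (b t l) :=
      hmSb b hb t l cA
    have hlin : ∀ a : A l, expUtil (u l (t l)) (nhat b) a
        = (1-r) * expUtil (u l (t l)) (m b) a + r * expUtil (u l (t l)) (nu' b) a := by
      intro a
      unfold expUtil
      rw [Finset.mul_sum, Finset.mul_sum, ← Finset.sum_add_distrib]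
      refine Finset.sum_congr rfl fun s _ => ?_
      have hco : (nhat b : S → ℝ) s = (1-r) * (m b : S → ℝ) s + r * (nu' b : S → ℝ) s := rfl
      rw [hco]; ring
    rw [hlin, hlin]
    have h1r : 0 ≤ 1 - r := by linarith
    nlinarith
  -- limits at the perturbed points
  have htd : Filter.Tendsto (fun ε => ∑ b, p b * regSenderGain u v η lam ε (nhat b))
      (nhdsWithin 0 (Set.Ioi (0:ℝ))) (𝓝 (∑ b, p b * rPhi v η b (nhat b))) := by
    refine tendsto_finset_sum _ fun b _ => ?_
    by_cases hb : p b = 0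
    · simp only [hb, zero_mul]
      exact tendsto_const_nhds
    · exact (tendsto_regSenderGain u v η lam hlampos (nhat b) b (hstrict b hb)).const_mul (p b)
  set Y := ∑ b, p b * rPhi v η b (nhat b) with hY
  -- bounds on Y
  have habsY : |Y| ≤ V := by
    calc |Y| ≤ ∑ b, |p b * rPhi v η b (nhat b)| := Finset.abs_sum_le_sum_abs _ _
      _ ≤ ∑ b, p b * V := by
          refine Finset.sum_le_sum fun b _ => ?_
          rw [abs_mul, abs_of_nonneg (hp0 b)]
          exact mul_le_mul_of_nonneg_left (abs_rPhi_le v η hη b (nhat b)) (hp0 b)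
      _ = V := by rw [← Finset.sum_mul, hpsum, one_mul]
  have hrPhilin : ∀ b, rPhi v η b (nhat b)
      = (1-r) * rPhi v η b (m b) + r * rPhi v η b (nu' b) := by
    intro b
    unfold rPhi
    rw [Finset.mul_sum, Finset.mul_sum, ← Finset.sum_add_distrib]
    refine Finset.sum_congr rfl fun t _ => ?_
    have hco : ∀ s, v s (b t) * (nhat b : S → ℝ) s
        = (1-r) * (v s (b t) * (m b : S → ℝ) s) + r * (v s (b t) * (nu' b : S → ℝ) s) := by
      intro s
      have : (nhat b : S → ℝ) s = (1-r) * (m b : S → ℝ) s + r * (nu' b : S → ℝ) s := rfl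
      rw [this]; ring
    rw [Finset.sum_congr rfl fun s _ => hco s, Finset.sum_add_distrib,
      ← Finset.mul_sum, ← Finset.mul_sum]
    ring
  have hYx : |Y - x| ≤ 2 * r * V := by
    have hE : |∑ b, p b * rPhi v η b (nu' b)| ≤ V := by
      calc |∑ b, p b * rPhi v η b (nu' b)| ≤ ∑ b, |p b * rPhi v η b (nu' b)| :=
            Finset.abs_sum_le_sum_abs _ _
        _ ≤ ∑ b, p b * V := by
            refine Finset.sum_le_sum fun b _ => ?_
            rw [abs_mul, abs_of_nonneg (hp0 b)]
            exact mul_le_mul_of_nonneg_left (abs_rPhi_le v η hη b (nu' b)) (hp0 b)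
        _ = V := by rw [← Finset.sum_mul, hpsum, one_mul]
    have hYexp : Y = (1-r) * x + r * ∑ b, p b * rPhi v η b (nu' b) := by
      rw [hY]
      have e3 : ∀ b, p b * rPhi v η b (nhat b)
          = (1-r) * (p b * rPhi v η b (m b)) + r * (p b * rPhi v η b (nu' b)) := by
        intro b; rw [hrPhilin b]; ring
      rw [Finset.sum_congr rfl fun b _ => e3 b, Finset.sum_add_distrib,
        ← Finset.mul_sum, ← Finset.mul_sum, ← hWint, ← hxeq]
    rw [hYexp]
    have h8 := abs_le.1 hE
    have h9 := abs_le.1 hxabs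
    rw [abs_le]
    constructor <;> nlinarith [hr0.le]
  -- final estimate
  refine ⟨τ', hbar', ?_⟩
  have hev2 : ∀ᶠ ε in nhdsWithin 0 (Set.Ioi (0:ℝ)),
      |(∑ b, p b * regSenderGain u v η lam ε (nhat b)) - Y| < δ/8 := by
    have := Metric.tendsto_nhds.1 htd (δ/8) (by linarith)
    simpa [Real.dist_eq] using this
  refine hev2.mono fun ε hε => ?_
  rw [hint _ (continuous_regSenderGain u v η lam hlampos ε)]
  have hb1 := abs_le.1 (abs_regSenderGain_le u v η lam hη hlampos ε ρ)
  have hb2 := abs_lt.1 hε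
  have hb3 := abs_le.1 habsY
  have hb4 := abs_le.1 hYx
  have hβV : β * V ≤ δ/16 := by
    have h10 : β * (16*(V+1)) ≤ δ := by
      rw [← le_div_iff₀ (by positivity)]
      exact hβδ
    nlinarith
  have hrV : r * V ≤ δ/16 := by nlinarith
  rw [abs_lt]
  constructor <;> nlinarith [hβ0.le, hV, mul_nonneg hβ0.le hV]

end Aux


/-- Under the assumption, there is a family `(τ^ε)_{ε>0} ⊆ T_μ` with
`∫ W^ε dτ^ε → W̄* = sup_{τ ∈ T_μ} ∫ W dτ` as `ε → 0⁺`. -/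
theorem exists_recovery_family {S : Type*} [Fintype S] [Nonempty S]
    {L : Type*} [Fintype L] [DecidableEq L]
    {A : L → Type*} [∀ l, Fintype (A l)] [∀ l, Nonempty (A l)]
    {T : L → Type*} [∀ l, Fintype (T l)] [∀ l, Nonempty (T l)]
    (u : ∀ l, T l → S → A l → ℝ) (v : S → (∀ l, A l) → ℝ)
    (η : ∀ l, T l → ℝ) (hη : ∀ l, η l ∈ stdSimplex ℝ (T l))
    (lam : ∀ l, A l → ℝ) (hlam : ∀ l, lam l ∈ stdSimplex ℝ (A l))
    (hlampos : ∀ l a, 0 < lam l a)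
    (μ : stdSimplex ℝ S) (hasm : regAssumption u μ) :
    ∃ τfam : ℝ → ProbabilityMeasure (stdSimplex ℝ S),
      (∀ ε, 0 < ε → τfam ε ∈ barycentric μ) ∧
      Filter.Tendsto
        (fun ε => ∫ ν, regSenderGain u v η lam ε ν
          ∂(τfam ε : Measure (stdSimplex ℝ S)))
        (nhdsWithin 0 (Set.Ioi (0 : ℝ)))
        (nhds (sSup {x : ℝ | ∃ τ ∈ barycentric μ,
          x = ∫ ν, senderGain u v η ν ∂(τ : Measure (stdSimplex ℝ S))})) := by
  classical
  have key : ∀ n : ℕ, ∃ τ' : ProbabilityMeasure (stdSimplex ℝ S), τ' ∈ barycentric μ ∧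
      ∃ e : ℝ, 0 < e ∧ ∀ ε : ℝ, 0 < ε → ε < e →
        |(∫ ν, regSenderGain u v η lam ε ν ∂(τ' : Measure (stdSimplex ℝ S)))
          - rWstar u v η μ| < 1/(n+1) := by
    intro n
    obtain ⟨τ', h1, h2⟩ := key_lemma u v η lam hη hlampos μ hasm (1/(n+1)) (by positivity)
    refine ⟨τ', h1, ?_⟩
    have h3 := Filter.eventually_iff.1 h2
    rw [mem_nhdsGT_iff_exists_Ioo_subset] at h3
    obtain ⟨e, he, hsub⟩ := h3
    exact ⟨e, he, fun ε hε0 hεe => hsub ⟨hε0, hεe⟩⟩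
  choose τn hbar en hen0 hen using key
  set d : ℕ → ℝ :=
    fun n => min ((Finset.range (n+1)).inf' Finset.nonempty_range_add_one en) (1/(n+1)) with hd
  have hd0 : ∀ n, 0 < d n := by
    intro n
    refine lt_min ?_ (by positivity)
    rw [Finset.lt_inf'_iff]
    exact fun i _ => hen0 i
  have hdle : ∀ n, d n ≤ en n := fun n =>
    (min_le_left _ _).trans (Finset.inf'_le _ (Finset.self_mem_range_succ n))
  have hdlim : ∀ n, d n ≤ 1/(n+1) := fun n => min_le_right _ _
  set N : ℝ → ℕ := fun ε => sSup {n : ℕ | ε < d n} with hN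
  refine ⟨fun ε => τn (N ε), fun ε _ => hbar (N ε), ?_⟩
  show Filter.Tendsto
    (fun ε => ∫ ν, regSenderGain u v η lam ε ν ∂((τn (N ε)) : Measure (stdSimplex ℝ S)))
    (nhdsWithin 0 (Set.Ioi (0:ℝ))) (nhds (rWstar u v η μ))
  rw [Metric.tendsto_nhdsWithin_nhds]
  intro δ hδ
  obtain ⟨n, hn⟩ := exists_nat_one_div_lt hδ
  refine ⟨d n, hd0 n, ?_⟩
  intro ε hε hdist
  rw [Real.dist_eq, sub_zero] at hdist
  have hε0 : 0 < ε := hε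
  have hεd : ε < d n := by rwa [abs_of_pos hε0] at hdist
  have hmemn : n ∈ {k : ℕ | ε < d k} := hεd
  have hbdd : BddAbove {k : ℕ | ε < d k} := by
    obtain ⟨M, hM⟩ := exists_nat_one_div_lt hε0
    refine ⟨M, fun k hk => ?_⟩
    by_contra hcon
    push_neg at hcon
    have h1 : d k ≤ 1/(k+1) := hdlim k
    have h2 : (1:ℝ)/(k+1) ≤ 1/(M+1) := by
      apply one_div_le_one_div_of_le (by positivity)
      have : (M:ℝ) ≤ k := by exact_mod_cast hcon.le
      linarith
    simp only [Set.mem_setOf_eq] at hk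
    linarith
  have hNmem : ε < d (N ε) := Nat.sSup_mem ⟨n, hmemn⟩ hbdd
  have hNge : n ≤ N ε := le_csSup hbdd hmemn
  have hlt2 := hen (N ε) ε hε0 (lt_of_lt_of_le hNmem (hdle (N ε)))
  rw [Real.dist_eq]
  refine lt_trans (lt_of_lt_of_le hlt2 ?_) hn
  apply one_div_le_one_div_of_le (by positivity)
  have : (n:ℝ) ≤ N ε := by exact_mod_cast hNge
  linarith

end
end

section
/- Consider one receiver with one type, S = {s₁, s₂}, A = {a₁, a₂}, λ = (1/2, 1/2), μ = (1/2, 1/2), receiver utility u(s₁,a₁) = 1 and u(s₂,a₁) = u(s₁,a₂) = u(s₂,a₂) = 0, and sender utility v(s,a₁) = 0, v(s,a₂) = 1 for both s. Then W̄* = sup_{τ ∈ T_μ} ∫_{Δ(S)} W dτ = 1/2, while lim_{ε→0⁺} W̄^{ε,*} = 1/4, where W̄^{ε,*} = sup_{τ ∈ T_μ} ∫_{Δ(S)} W^ε dτ; in particular lim_{ε→0⁺} W̄^{ε,*} < W̄*. -/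
open MeasureTheory Finset

noncomputable section

/-- Sender's gain for a single receiver with a single type:
`W(ν) = max_{a ∈ A*(ν)} Σ_s v(s,a) ν(s)` (ties broken in the sender's favor). -/
def senderGain₁ {S α : Type*} [Fintype S] (u v : S → α → ℝ) (ν : stdSimplex ℝ S) : ℝ :=
  sSup {x : ℝ | ∃ a ∈ admissible u ν, x = expUtil v ν a}

/-- Regularized sender's gain for a single receiver with a single type:
`W^ε(ν) = Σ_s Σ_a v(s,a) ν(s) θ^ε_ν(a)`. -/
def regSenderGain₁ {S α : Type*} [Fintype S] [Fintype α] (u v : S → α → ℝ)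
    (lam : α → ℝ) (ε : ℝ) (ν : stdSimplex ℝ S) : ℝ :=
  ∑ s, ∑ a, v s a * (ν : S → ℝ) s * regStrategy u lam ε ν a

namespace SharpnessAux

abbrev X := ↥(stdSimplex ℝ (Fin 2))

instance : CompactSpace X := isCompact_iff_compactSpace.mp (isCompact_stdSimplex _ _)

/-- first coordinate -/
def c0 : X → ℝ := fun ν => (ν : Fin 2 → ℝ) 0

lemma continuous_c0 : Continuous c0 := (continuous_apply 0).comp continuous_subtype_val

lemma measurable_c0 : Measurable c0 := continuous_c0.measurable

lemma c0_nonneg (ν : X) : 0 ≤ c0 ν := ν.2.1 0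

lemma nu_sum (ν : X) : (ν : Fin 2 → ℝ) 0 + (ν : Fin 2 → ℝ) 1 = 1 := by
  have := ν.2.2; rwa [Fin.sum_univ_two] at this

lemma c0_le_one (ν : X) : c0 ν ≤ 1 := by
  have h := nu_sum ν
  have : 0 ≤ (ν : Fin 2 → ℝ) 1 := ν.2.1 1
  simp only [c0]; linarith

variable {u v : Fin 2 → Fin 2 → ℝ}

lemma expUtil_u (hu : ∀ s a, u s a = if s = 0 ∧ a = 0 then 1 else 0)
    (ν : X) : expUtil u ν 0 = (ν : Fin 2 → ℝ) 0 ∧ expUtil u ν 1 = 0 := by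
  constructor <;> simp [expUtil, Fin.sum_univ_two, hu]

lemma expUtil_v (hv : ∀ s a, v s a = if a = 1 then 1 else 0)
    (ν : X) : expUtil v ν 0 = 0 ∧ expUtil v ν 1 = 1 := by
  constructor <;> simp [expUtil, Fin.sum_univ_two, hv, nu_sum ν]

lemma W_eq (hu : ∀ s a, u s a = if s = 0 ∧ a = 0 then 1 else 0)
    (hv : ∀ s a, v s a = if a = 1 then 1 else 0) (ν : X) :
    senderGain₁ u v ν = if (ν : Fin 2 → ℝ) 0 = 0 then 1 else 0 := by
  obtain ⟨hu0, hu1⟩ := expUtil_u hu ν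
  obtain ⟨hv0, hv1⟩ := expUtil_v hv ν
  have hpos : 0 ≤ (ν : Fin 2 → ℝ) 0 := ν.2.1 0
  have h0adm : (0 : Fin 2) ∈ admissible u ν := by
    intro b; fin_cases b <;> simp [hu0, hu1, hpos]
  by_cases h : (ν : Fin 2 → ℝ) 0 = 0
  · have h1adm : (1 : Fin 2) ∈ admissible u ν := by
      intro b; fin_cases b <;> simp [hu0, hu1, h]
    have : {x : ℝ | ∃ a ∈ admissible u ν, x = expUtil v ν a} = {0, 1} := by
      ext x
      constructor
      · rintro ⟨a, _, rfl⟩; fin_cases a <;> simp [hv0, hv1]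
      · rintro (rfl | rfl)
        exacts [⟨0, h0adm, hv0.symm⟩, ⟨1, h1adm, hv1.symm⟩]
    rw [senderGain₁, this, csSup_pair]; simp [h]
  · have h1nadm : (1 : Fin 2) ∉ admissible u ν := by
      intro hmem
      have := hmem 0
      rw [hu0, hu1] at this
      exact h (le_antisymm this hpos)
    have : {x : ℝ | ∃ a ∈ admissible u ν, x = expUtil v ν a} = {0} := by
      ext x
      constructor
      · rintro ⟨a, ha, rfl⟩; fin_cases a
        · simp [hv0]
        · exact absurd ha h1nadm
      · rintro rfl; exact ⟨0, h0adm, hv0.symm⟩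
    rw [senderGain₁, this, csSup_singleton]; simp [h]

lemma Weps_eq (hu : ∀ s a, u s a = if s = 0 ∧ a = 0 then 1 else 0)
    (hv : ∀ s a, v s a = if a = 1 then 1 else 0) {lam : Fin 2 → ℝ} (hlam : ∀ a, lam a = 1 / 2)
    (ε : ℝ) (ν : X) :
    regSenderGain₁ u v lam ε ν = (Real.exp ((ν : Fin 2 → ℝ) 0 / ε) + 1)⁻¹ := by
  obtain ⟨hu0, hu1⟩ := expUtil_u hu ν
  have hE : Real.exp ((ν : Fin 2 → ℝ) 0 / ε) > 0 := Real.exp_pos _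
  have hsum := nu_sum ν
  simp only [regSenderGain₁, regStrategy, Fin.sum_univ_two, hu0, hu1, hlam, hv]
  norm_num
  field_simp
  linear_combination hsum

/-- the two extreme points -/
def vlo : X := ⟨![0, 1], ⟨fun s => by fin_cases s <;> norm_num, by simp [Fin.sum_univ_two]⟩⟩
def vhi : X := ⟨![1, 0], ⟨fun s => by fin_cases s <;> norm_num, by simp [Fin.sum_univ_two]⟩⟩

lemma vlo0 : (vlo : Fin 2 → ℝ) 0 = 0 := rfl
lemma vlo1 : (vlo : Fin 2 → ℝ) 1 = 1 := rfl
lemma vhi0 : (vhi : Fin 2 → ℝ) 0 = 1 := rfl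
lemma vhi1 : (vhi : Fin 2 → ℝ) 1 = 0 := rfl

/-- the optimal splitting `½ δ_{(0,1)} + ½ δ_{(1,0)}` -/
def m : Measure X := (1/2 : ENNReal) • Measure.dirac vlo + (1/2 : ENNReal) • Measure.dirac vhi

instance : IsProbabilityMeasure m := by
  constructor
  simp [m]
  rw [← ENNReal.add_halves 1]; norm_num

def tau : ProbabilityMeasure X := ⟨m, by infer_instance⟩

lemma integral_m (f : X → ℝ) (hf : Measurable f) :
    ∫ x, f x ∂m = (1/2) * f vlo + (1/2) * f vhi := by
  have h1 : Integrable f ((1/2 : ENNReal) • Measure.dirac vlo) := by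
    refine Integrable.smul_measure ?_ (by norm_num)
    exact ⟨hf.aestronglyMeasurable, by simp [HasFiniteIntegral, lintegral_dirac]⟩
  have h2 : Integrable f ((1/2 : ENNReal) • Measure.dirac vhi) := by
    refine Integrable.smul_measure ?_ (by norm_num)
    exact ⟨hf.aestronglyMeasurable, by simp [HasFiniteIntegral, lintegral_dirac]⟩
  rw [m, integral_add_measure h1 h2, integral_smul_measure, integral_smul_measure,
    integral_dirac' f vlo hf.stronglyMeasurable, integral_dirac' f vhi hf.stronglyMeasurable]
  norm_num

lemma tau_barycentric {μ : stdSimplex ℝ (Fin 2)} (hμ : ∀ s, (μ : Fin 2 → ℝ) s = 1 / 2) :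
    tau ∈ barycentric μ := by
  intro s
  have hm : Measurable fun ν : X => (ν : Fin 2 → ℝ) s :=
    ((continuous_apply s).comp continuous_subtype_val).measurable
  have : (tau : Measure X) = m := rfl
  rw [this, integral_m _ hm, hμ s]
  fin_cases s <;> simp [vlo0, vlo1, vhi0, vhi1]

/-- boundedness gives integrability -/
lemma intg {f : X → ℝ} (hf : Measurable f) {C : ℝ} (hC : ∀ x, |f x| ≤ C)
    (τ : Measure X) [IsFiniteMeasure τ] : Integrable f τ :=
  Integrable.mono' (integrable_const C) hf.aestronglyMeasurable
    (Filter.Eventually.of_forall fun x => by simpa using hC x)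

lemma integrable_c0 (τ : Measure X) [IsFiniteMeasure τ] : Integrable c0 τ :=
  intg measurable_c0 (C := 1) (fun x => abs_le.2 ⟨by linarith [c0_nonneg x], c0_le_one x⟩) τ

/-- key linear upper bound integral: for any barycentric `τ`,
`∫ ((1 - c0 ν)/2 + B) dτ = 1/4 + B`. -/
lemma integral_linear_bound {μ : stdSimplex ℝ (Fin 2)} (hμ : ∀ s, (μ : Fin 2 → ℝ) s = 1 / 2)
    (τ : ProbabilityMeasure X) (hτ : τ ∈ barycentric μ) (B : ℝ) :
    ∫ ν, ((1 - c0 ν) / 2 + B) ∂(τ : Measure X) = 1 / 4 + B := by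
  have hc0 : ∫ ν, c0 ν ∂(τ : Measure X) = 1 / 2 := by
    have := hτ 0; rw [hμ 0] at this; exact this
  have h1 : Integrable (fun ν : X => (1 - c0 ν) / 2) (τ : Measure X) := by
    refine intg (((measurable_const.sub measurable_c0).div_const 2)) (C := 1) (fun x => ?_) _
    rw [abs_le]
    simp only [Pi.sub_apply]
    constructor <;> [skip; skip] <;> nlinarith [c0_nonneg x, c0_le_one x]
  rw [integral_add h1 (integrable_const B), integral_const]
  have : ∫ ν, (1 - c0 ν) / 2 ∂(τ : Measure X)
      = ∫ ν, ((-(1/2)) * c0 ν + 1/2) ∂(τ : Measure X) := by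
    congr 1; funext x; ring
  rw [this, integral_add ((integrable_c0 _).const_mul _) (integrable_const _),
    integral_const_mul, hc0, integral_const]
  simp
  ring

lemma key_ineq {ε : ℝ} (hε : 0 < ε) {p : ℝ} (hp0 : 0 ≤ p) (hp1 : p ≤ 1) :
    (Real.exp (p / ε) + 1)⁻¹
      ≤ (1 - p) / 2 + (Real.sqrt ε / 2 + Real.exp (-(Real.sqrt ε)⁻¹)) := by
  have hsq : 0 < Real.sqrt ε := Real.sqrt_pos.2 hε
  have hEpos : (0:ℝ) < Real.exp (p / ε) + 1 := by positivity
  rcases le_or_gt p (Real.sqrt ε) with hle | hgt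
  · have h1 : (1:ℝ) ≤ Real.exp (p / ε) :=
      Real.one_le_exp (div_nonneg hp0 hε.le)
    have hhalf : (Real.exp (p / ε) + 1)⁻¹ ≤ 1 / 2 := by
      have := inv_anti₀ (by norm_num : (0:ℝ) < 2) (by linarith : (2:ℝ) ≤ Real.exp (p / ε) + 1)
      norm_num at this ⊢
      linarith
    have : (1 - p) / 2 + p / 2 = 1 / 2 := by ring
    have hexp : (0:ℝ) ≤ Real.exp (-(Real.sqrt ε)⁻¹) := (Real.exp_pos _).le
    nlinarith [hhalf, hle, hexp]
  · have hp2 : (Real.sqrt ε)⁻¹ ≤ p / ε := by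
      rw [le_div_iff₀ hε]
      have h : (Real.sqrt ε)⁻¹ * ε = Real.sqrt ε := by
        rw [← Real.mul_self_sqrt hε.le]
        field_simp
        rw [Real.sqrt_sq hsq.le]
      rw [h]
      linarith
    have h1 : (Real.exp (p / ε) + 1)⁻¹ ≤ (Real.exp (p / ε))⁻¹ := by
      apply inv_anti₀ (Real.exp_pos _)
      linarith
    have h2 : (Real.exp (p / ε))⁻¹ = Real.exp (-(p / ε)) := (Real.exp_neg _).symm
    have h3 : Real.exp (-(p / ε)) ≤ Real.exp (-(Real.sqrt ε)⁻¹) :=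
      Real.exp_le_exp.2 (by linarith)
    have : (0:ℝ) ≤ (1 - p) / 2 := by linarith
    have : (0:ℝ) ≤ Real.sqrt ε / 2 := by positivity
    linarith [h1, h2 ▸ h3]

end SharpnessAux

/-- **sharpness of the assumption.** In the two-state, two-action,
single-receiver example with `u(s₁,a₁) = 1` (all other receiver utilities `0`),
`v(·,a₁) = 0`, `v(·,a₂) = 1`, uniform `λ` and uniform prior `μ`, one has
`W̄* = 1/2` while `W̄^{ε,*} → 1/4` as `ε → 0⁺`; in particular the regularized optimal
values do not converge to `W̄*`. -/
theorem sharpness_example {u v : Fin 2 → Fin 2 → ℝ}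
    (hu : ∀ s a, u s a = if s = 0 ∧ a = 0 then 1 else 0)
    (hv : ∀ s a, v s a = if a = 1 then 1 else 0)
    (lam : Fin 2 → ℝ) (hlam : ∀ a, lam a = 1 / 2)
    (μ : stdSimplex ℝ (Fin 2)) (hμ : ∀ s, (μ : Fin 2 → ℝ) s = 1 / 2) :
    sSup {x : ℝ | ∃ τ ∈ barycentric μ,
        x = ∫ ν, senderGain₁ u v ν ∂(τ : Measure (stdSimplex ℝ (Fin 2)))} = 1 / 2 ∧
    Filter.Tendsto
      (fun ε => sSup {x : ℝ | ∃ τ ∈ barycentric μ,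
        x = ∫ ν, regSenderGain₁ u v lam ε ν ∂(τ : Measure (stdSimplex ℝ (Fin 2)))})
      (nhdsWithin 0 (Set.Ioi (0 : ℝ))) (nhds (1 / 4)) := by
  open SharpnessAux in
  constructor
  · -- part 1
    set Wf : X → ℝ := fun ν => if c0 ν = 0 then 1 else 0 with hWf
    have hWeq : (fun ν : X => senderGain₁ u v ν) = Wf := funext fun ν => W_eq hu hv ν
    have hWmeas : Measurable Wf := by
      apply Measurable.ite _ measurable_const measurable_const
      exact measurable_c0 (measurableSet_singleton 0)
    have hWbound : ∀ x, |Wf x| ≤ 1 := by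
      intro x; rw [hWf]; dsimp only; split <;> norm_num
    refine IsGreatest.csSup_eq ⟨⟨tau, tau_barycentric hμ, ?_⟩, ?_⟩
    · show (1:ℝ)/2 = ∫ ν, senderGain₁ u v ν ∂(tau : Measure X)
      have : (tau : Measure X) = m := rfl
      rw [this]
      simp only [hWeq]
      rw [integral_m Wf hWmeas]
      have h1 : Wf vlo = 1 := by rw [hWf]; simp [c0, vlo0]
      have h2 : Wf vhi = 0 := by rw [hWf]; simp [c0, vhi0]
      rw [h1, h2]; ring
    · rintro x ⟨τ, hτ, rfl⟩
      simp only [hWeq]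
      have hint1 : Integrable Wf (τ : Measure X) := intg hWmeas hWbound _
      have hint2 : Integrable (fun ν : X => 1 - c0 ν) (τ : Measure X) :=
        (integrable_const 1).sub (integrable_c0 _)
      have hmono : ∫ ν, Wf ν ∂(τ : Measure X) ≤ ∫ ν, (1 - c0 ν) ∂(τ : Measure X) := by
        refine integral_mono hint1 hint2 fun ν => ?_
        rw [hWf]; dsimp only
        split_ifs with h
        · simp only [c0] at h ⊢; rw [h]; norm_num
        · have := c0_le_one ν; linarith
      have hc0int : ∫ ν, c0 ν ∂(τ : Measure X) = 1 / 2 := by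
        have := hτ 0; rw [hμ 0] at this; exact this
      have : ∫ ν, (1 - c0 ν) ∂(τ : Measure X) = 1 - 1/2 := by
        rw [integral_sub (integrable_const 1) (integrable_c0 _), integral_const, hc0int]
        simp
      linarith [hmono, this.le]
  · -- part 2
    set L : ℝ → ℝ := fun ε => 1/4 + (1/2) * (Real.exp ε⁻¹ + 1)⁻¹ with hL
    set Ub : ℝ → ℝ := fun ε => 1/4 + (Real.sqrt ε / 2 + Real.exp (-(Real.sqrt ε)⁻¹)) with hUb
    have key : ∀ ε : ℝ, 0 < ε →
        L ε ≤ sSup {x : ℝ | ∃ τ ∈ barycentric μ,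
          x = ∫ ν, regSenderGain₁ u v lam ε ν ∂(τ : Measure X)} ∧
        sSup {x : ℝ | ∃ τ ∈ barycentric μ,
          x = ∫ ν, regSenderGain₁ u v lam ε ν ∂(τ : Measure X)} ≤ Ub ε := by
      intro ε hε
      set g : X → ℝ := fun ν => (Real.exp (c0 ν / ε) + 1)⁻¹ with hg
      have hgeq : (fun ν : X => regSenderGain₁ u v lam ε ν) = g :=
        funext fun ν => Weps_eq hu hv hlam ε ν
      have hgmeas : Measurable g := by
        apply Measurable.inv
        exact (Real.measurable_exp.comp (measurable_c0.div_const ε)).add measurable_const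
      have hgbound : ∀ x, |g x| ≤ 1 := by
        intro x
        have h1 : (0:ℝ) < Real.exp (c0 x / ε) + 1 := by positivity
        have h2 : (1:ℝ) ≤ Real.exp (c0 x / ε) + 1 := by linarith [(Real.exp_pos (c0 x / ε)).le]
        rw [hg]; dsimp only
        rw [abs_of_nonneg (by positivity)]
        exact inv_le_one_of_one_le₀ h2
      have hmemval : ∫ ν, regSenderGain₁ u v lam ε ν ∂(tau : Measure X) = L ε := by
        have : (tau : Measure X) = m := rfl
        rw [this]
        simp only [hgeq]
        rw [integral_m g hgmeas]
        have h1 : g vlo = 1/2 := by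
          rw [hg]; dsimp only; simp [c0, vlo0]
          norm_num
        have h2 : g vhi = (Real.exp ε⁻¹ + 1)⁻¹ := by
          rw [hg]; dsimp only; simp [c0, vhi0]
        rw [h1, h2, hL]; ring
      have hmem : L ε ∈ {x : ℝ | ∃ τ ∈ barycentric μ,
          x = ∫ ν, regSenderGain₁ u v lam ε ν ∂(τ : Measure X)} :=
        ⟨tau, tau_barycentric hμ, hmemval.symm⟩
      set B : ℝ := Real.sqrt ε / 2 + Real.exp (-(Real.sqrt ε)⁻¹) with hB
      have hub : ∀ x ∈ {x : ℝ | ∃ τ ∈ barycentric μ,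
          x = ∫ ν, regSenderGain₁ u v lam ε ν ∂(τ : Measure X)}, x ≤ Ub ε := by
        rintro x ⟨τ, hτ, rfl⟩
        simp only [hgeq]
        have hint1 : Integrable g (τ : Measure X) := intg hgmeas hgbound _
        have hlin : Integrable (fun ν : X => (1 - c0 ν) / 2) (τ : Measure X) := by
          refine intg (((measurable_const.sub measurable_c0).div_const 2)) (C := 1)
            (fun x => ?_) _
          rw [abs_le]
          simp only [Pi.sub_apply]
          constructor <;> [skip; skip] <;> nlinarith [c0_nonneg x, c0_le_one x]
        have hint2 : Integrable (fun ν : X => (1 - c0 ν) / 2 + B) (τ : Measure X) :=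
          hlin.add (integrable_const B)
        have hmono : ∫ ν, g ν ∂(τ : Measure X)
            ≤ ∫ ν, ((1 - c0 ν) / 2 + B) ∂(τ : Measure X) := by
          refine integral_mono hint1 hint2 fun ν => ?_
          exact key_ineq hε (c0_nonneg ν) (c0_le_one ν)
        rw [integral_linear_bound hμ τ hτ B] at hmono
        rw [hUb]
        exact hmono
      refine ⟨le_csSup ⟨Ub ε, fun x hx => hub x hx⟩ hmem, csSup_le ⟨L ε, hmem⟩ hub⟩
    have hLtend : Filter.Tendsto L (nhdsWithin 0 (Set.Ioi (0:ℝ))) (nhds (1/4)) := by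
      have h1 : Filter.Tendsto (fun ε : ℝ => ε⁻¹) (nhdsWithin 0 (Set.Ioi (0:ℝ)))
          Filter.atTop := tendsto_inv_nhdsGT_zero
      have h2 := Real.tendsto_exp_atTop.comp h1
      have h3 := Filter.tendsto_atTop_add_const_right _ (1:ℝ) h2
      have h4 := h3.inv_tendsto_atTop
      have h5 := Filter.Tendsto.add (tendsto_const_nhds (x := (1/4 : ℝ)))
        (h4.const_mul (1/2 : ℝ))
      simp only [Function.comp] at h5
      have : (1/4 : ℝ) + (1/2) * 0 = 1/4 := by ring
      rw [this] at h5
      exact h5.congr fun ε => by rw [hL]; simp [Pi.inv_apply]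
    have hs0 : Filter.Tendsto Real.sqrt (nhdsWithin 0 (Set.Ioi (0:ℝ))) (nhds 0) := by
      have := (Real.continuous_sqrt.tendsto 0).mono_left
        (nhdsWithin_le_nhds (s := Set.Ioi (0:ℝ)))
      simpa using this
    have hs : Filter.Tendsto Real.sqrt (nhdsWithin 0 (Set.Ioi (0:ℝ)))
        (nhdsWithin 0 (Set.Ioi (0:ℝ))) := by
      rw [tendsto_nhdsWithin_iff]
      refine ⟨hs0, ?_⟩
      filter_upwards [self_mem_nhdsWithin] with ε hε
      exact Real.sqrt_pos.2 hε
    have hUtend : Filter.Tendsto Ub (nhdsWithin 0 (Set.Ioi (0:ℝ))) (nhds (1/4)) := by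
      have hinv := tendsto_inv_nhdsGT_zero.comp hs
      have hneg := Filter.tendsto_neg_atTop_atBot.comp hinv
      have hexp := Real.tendsto_exp_atBot.comp hneg
      have hsq2 : Filter.Tendsto (fun ε : ℝ => Real.sqrt ε / 2)
          (nhdsWithin 0 (Set.Ioi (0:ℝ))) (nhds 0) := by
        have := hs0.div_const 2
        simpa using this
      have h5 := Filter.Tendsto.add (tendsto_const_nhds (x := (1/4 : ℝ)))
        (hsq2.add hexp)
      simp only [Function.comp] at h5
      have : (1/4 : ℝ) + (0 + 0) = 1/4 := by ring
      rw [this] at h5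
      exact h5.congr fun ε => by rw [hUb]
    refine tendsto_of_tendsto_of_tendsto_of_le_of_le' hLtend hUtend ?_ ?_
    · filter_upwards [self_mem_nhdsWithin] with ε hε
      exact (key ε hε).1
    · filter_upwards [self_mem_nhdsWithin] with ε hε
      exact (key ε hε).2

end
end

section
/- Fix a receiver ℓ of type t_ℓ. Let ν̃, ν* ∈ Δ(S) and a ∈ A_ℓ be such that A*_{t_ℓ}(ν̃) = {a} and a ∈ A*_{t_ℓ}(ν*). For ε ∈ (0,1) set ν^ε = ε^{1/2} ν̃ + (1 − ε^{1/2}) ν* ∈ Δ(S). Then the regularized strategies θ^ε_{t_ℓ,ν^ε} converge to the point mass δ_a in Δ(A_ℓ) as ε → 0⁺. -/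
open MeasureTheory Finset

noncomputable section

/-- Let `ν̃, ν* ∈ Δ(S)` and `a` be such that `A*(ν̃) = {a}` and
`a ∈ A*(ν*)`.  For `ε ∈ (0,1)` set `ν^ε = √ε ν̃ + (1 − √ε) ν*`.  Then the regularized
strategies `θ^ε_{ν^ε}` converge to the point mass `δ_a` as `ε → 0⁺`. -/
theorem reg_strategy_tendsto_forced_action {S : Type*} [Fintype S] [Nonempty S]
    {α : Type*} [Fintype α] [Nonempty α] [DecidableEq α]
    (u : S → α → ℝ) (lam : α → ℝ) (hlam : lam ∈ stdSimplex ℝ α)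
    (hlampos : ∀ b, 0 < lam b)
    (νtil νstar : stdSimplex ℝ S) (a : α)
    (hforced : admissible u νtil = {a})
    (hadm : a ∈ admissible u νstar)
    (νε : ℝ → stdSimplex ℝ S)
    (hνε : ∀ ε ∈ Set.Ioo (0 : ℝ) 1, ∀ s,
      (νε ε : S → ℝ) s =
        Real.sqrt ε * (νtil : S → ℝ) s + (1 - Real.sqrt ε) * (νstar : S → ℝ) s) :
    Filter.Tendsto (fun ε => regStrategy u lam ε (νε ε))
      (nhdsWithin 0 (Set.Ioi (0 : ℝ)))
      (nhds (fun b => if b = a then (1 : ℝ) else 0)) := by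
  classical
  have hlamapos := hlampos a
  -- auxiliary family
  set f : ℝ → α → ℝ := fun ε b =>
    (lam b / lam a) * Real.exp ((expUtil u (νε ε) b - expUtil u (νε ε) a) / ε) with hf
  have hEq : ∀ ε, regStrategy u lam ε (νε ε) = fun b => f ε b / ∑ b', f ε b' := by
    intro ε
    funext b
    have hden : lam a * Real.exp (expUtil u (νε ε) a / ε) ≠ 0 :=
      (mul_pos hlamapos (Real.exp_pos _)).ne'
    have hfb : ∀ c, f ε c =
        (lam c * Real.exp (expUtil u (νε ε) c / ε)) /
        (lam a * Real.exp (expUtil u (νε ε) a / ε)) := by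
      intro c
      show lam c / lam a * Real.exp ((expUtil u (νε ε) c - expUtil u (νε ε) a) / ε) = _
      rw [sub_div, Real.exp_sub, div_mul_div_comm]
    rw [regStrategy, hfb, Finset.sum_congr rfl fun c _ => hfb c, ← Finset.sum_div,
      div_div_div_cancel_right₀ hden]
  -- key pointwise limits
  have hIoo : ∀ᶠ ε in nhdsWithin (0:ℝ) (Set.Ioi 0), ε ∈ Set.Ioo (0:ℝ) 1 :=
    Ioo_mem_nhdsGT_of_mem (by constructor <;> norm_num)
  have hEU : ∀ ε ∈ Set.Ioo (0:ℝ) 1, ∀ c, expUtil u (νε ε) c =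
      Real.sqrt ε * expUtil u νtil c + (1 - Real.sqrt ε) * expUtil u νstar c := by
    intro ε hε c
    simp only [expUtil, Finset.mul_sum]
    rw [← Finset.sum_add_distrib]
    refine Finset.sum_congr rfl fun s _ => ?_
    rw [hνε ε hε s]; ring
  have key : ∀ b, Filter.Tendsto (fun ε => f ε b) (nhdsWithin 0 (Set.Ioi (0:ℝ)))
      (nhds (if b = a then (1:ℝ) else 0)) := by
    intro b
    by_cases hb : b = a
    · subst hb
      have : ∀ ε : ℝ, f ε b = 1 := by
        intro ε
        rw [hf]; simp [div_self hlamapos.ne']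
      simp only [this, if_pos rfl]
      exact tendsto_const_nhds
    · rw [if_neg hb]
      -- strict suboptimality under νtil
      have hatil : a ∈ admissible u νtil := by rw [hforced]; rfl
      have hbtil : b ∉ admissible u νtil := by rw [hforced]; simpa using hb
      have hdtil : expUtil u νtil b - expUtil u νtil a < 0 := by
        rw [sub_neg]
        simp only [admissible, Set.mem_setOf_eq, not_forall, not_le] at hbtil
        obtain ⟨c, hc⟩ := hbtil
        exact lt_of_lt_of_le hc (hatil c)
      have hdstar : expUtil u νstar b - expUtil u νstar a ≤ 0 := by
        rw [sub_nonpos]; exact hadm b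
      set d : ℝ := expUtil u νtil b - expUtil u νtil a with hd
      -- the exponent is ≤ d / √ε eventually
      have hbound : ∀ᶠ ε in nhdsWithin (0:ℝ) (Set.Ioi 0),
          (expUtil u (νε ε) b - expUtil u (νε ε) a) / ε ≤ d / Real.sqrt ε := by
        filter_upwards [hIoo] with ε hε
        have hε0 : (0:ℝ) < ε := hε.1
        have hs0 : 0 < Real.sqrt ε := Real.sqrt_pos.2 hε0
        have hs1 : Real.sqrt ε ≤ 1 := by
          rw [show (1:ℝ) = Real.sqrt 1 by simp]
          exact Real.sqrt_le_sqrt hε.2.le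
        have hdiff : expUtil u (νε ε) b - expUtil u (νε ε) a =
            Real.sqrt ε * d + (1 - Real.sqrt ε) *
              (expUtil u νstar b - expUtil u νstar a) := by
          rw [hEU ε hε b, hEU ε hε a, hd]; ring
        have hsq : Real.sqrt ε * Real.sqrt ε = ε := Real.mul_self_sqrt hε0.le
        have h1 : Real.sqrt ε * d / ε = d / Real.sqrt ε := by
          field_simp
          linear_combination d * hsq
        rw [hdiff, add_div, h1]
        have h2 : (1 - Real.sqrt ε) * (expUtil u νstar b - expUtil u νstar a) / ε ≤ 0 :=
          div_nonpos_of_nonpos_of_nonneg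
            (mul_nonpos_of_nonneg_of_nonpos (by linarith) hdstar) hε0.le
        linarith
      -- d / √ε → -∞
      have hsqrt : Filter.Tendsto (fun ε : ℝ => Real.sqrt ε)
          (nhdsWithin 0 (Set.Ioi 0)) (nhdsWithin 0 (Set.Ioi 0)) := by
        have h0 : Filter.Tendsto (fun ε : ℝ => Real.sqrt ε) (nhds 0) (nhds 0) := by
          simpa using Real.continuous_sqrt.tendsto 0
        rw [tendsto_nhdsWithin_iff]
        refine ⟨h0.mono_left nhdsWithin_le_nhds, ?_⟩
        filter_upwards [self_mem_nhdsWithin] with ε (hε : ε ∈ Set.Ioi 0)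
        exact Real.sqrt_pos.2 hε
      have hinv : Filter.Tendsto (fun ε : ℝ => (Real.sqrt ε)⁻¹)
          (nhdsWithin 0 (Set.Ioi 0)) Filter.atTop :=
        tendsto_inv_nhdsGT_zero.comp hsqrt
      have hdb : Filter.Tendsto (fun ε : ℝ => d / Real.sqrt ε)
          (nhdsWithin 0 (Set.Ioi 0)) Filter.atBot := by
        simp only [div_eq_mul_inv]
        exact (Filter.tendsto_const_mul_atBot_of_neg hdtil).2 hinv
      have hexp : Filter.Tendsto
          (fun ε : ℝ => Real.exp ((expUtil u (νε ε) b - expUtil u (νε ε) a) / ε))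
          (nhdsWithin 0 (Set.Ioi 0)) (nhds 0) := by
        apply squeeze_zero' (Filter.Eventually.of_forall fun ε => (Real.exp_pos _).le)
          (hbound.mono fun ε h => Real.exp_le_exp.2 h)
        exact Real.tendsto_exp_atBot.comp hdb
      have := hexp.const_mul (lam b / lam a)
      simpa [hf] using this
  have hsum : Filter.Tendsto (fun ε => ∑ b', f ε b') (nhdsWithin 0 (Set.Ioi (0:ℝ)))
      (nhds 1) := by
    have : Filter.Tendsto (fun ε => ∑ b', f ε b') (nhdsWithin 0 (Set.Ioi (0:ℝ)))
        (nhds (∑ b', if b' = a then (1:ℝ) else 0)) :=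
      tendsto_finset_sum _ fun b _ => key b
    simpa using this
  have hfinal : Filter.Tendsto (fun ε b => f ε b / ∑ b', f ε b')
      (nhdsWithin 0 (Set.Ioi (0:ℝ))) (nhds (fun b => if b = a then (1:ℝ) else 0)) := by
    rw [tendsto_pi_nhds]
    intro b
    have := (key b).div hsum one_ne_zero
    simpa [Pi.div_def] using this
  exact hfinal.congr fun ε => (hEq ε).symm


end
end
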